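/- arXiv:1801.09127 — 2 statements merged into one kernel-verified Lean document; each statement's English description precedes it below -/
import Mathlib

section
/- If a left R-module M has finite projective dimension, then Gpd(M) = X-Gpd(M) = pd(M). In particular, a module that is X-Gorenstein projective and of finite projective dimension is projective. -/
open CategoryTheory DirectSum

universe u

/-- An `𝒳`-complete projective resolution: a doubly infinite exact sequence of
projective `R`-modules that remains exact after applying `Hom_R(-, Y)`
for every `Y` in the class `𝒳`. -/
structure XCompleteResolution (R : Type u) [Ring R] (𝒳 : ModuleCat.{u} R → Prop) where
  P : ℤ → ModuleCat.{u} R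
  d : ∀ n : ℤ, P n →ₗ[R] P (n + 1)
  projective : ∀ n, Module.Projective R (P n)
  exact : ∀ n, Function.Exact (d n) (d (n + 1))
  homExact : ∀ (Y : ModuleCat.{u} R), 𝒳 Y → ∀ n : ℤ,
    Function.Exact (fun f : P (n + 1 + 1) →ₗ[R] Y => f ∘ₗ d (n + 1))
      (fun f : P (n + 1) →ₗ[R] Y => f ∘ₗ d n)

/-- `G` is `𝒳`-Gorenstein projective: it is a kernel in an `𝒳`-complete
projective resolution. -/
def XGorensteinProjective (R : Type u) [Ring R] (𝒳 : ModuleCat.{u} R → Prop)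
    (G : ModuleCat.{u} R) : Prop :=
  ∃ C : XCompleteResolution R 𝒳, Nonempty (G ≃ₗ[R] LinearMap.ker (C.d 0))

/-- `ResWithKernel R 𝒞 n K M` says that there is an exact sequence
`0 → K → G_{n-1} → ⋯ → G_0 → M → 0` in which every `G_i` belongs to the class `𝒞`. -/
def ResWithKernel (R : Type u) [Ring R] (𝒞 : ModuleCat.{u} R → Prop) :
    ℕ → ModuleCat.{u} R → ModuleCat.{u} R → Prop
  | 0, K, M => Nonempty (K ≃ₗ[R] M)
  | n + 1, K, M => ∃ (G L : ModuleCat.{u} R) (f : L →ₗ[R] G) (g : G →ₗ[R] M),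
      𝒞 G ∧ Function.Injective f ∧ Function.Surjective g ∧ Function.Exact f g ∧
      ResWithKernel R 𝒞 n K L

/-- The resolution dimension of `M` with respect to a class `𝒞` of modules:
the least length of a resolution of `M` by modules in `𝒞` (`⊤` if none exists). -/
noncomputable def relDim (R : Type u) [Ring R] (𝒞 : ModuleCat.{u} R → Prop)
    (M : ModuleCat.{u} R) : ℕ∞ :=
  sInf {n : ℕ∞ | ∃ m : ℕ, n = m ∧ ∃ K, 𝒞 K ∧ ResWithKernel R 𝒞 m K M}

/-- The `𝒳`-Gorenstein projective dimension of `M`. -/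
noncomputable def xGpd (R : Type u) [Ring R] (𝒳 : ModuleCat.{u} R → Prop)
    (M : ModuleCat.{u} R) : ℕ∞ :=
  relDim R (XGorensteinProjective R 𝒳) M

/-- The projective dimension of `M`. -/
noncomputable def pdim (R : Type u) [Ring R] (M : ModuleCat.{u} R) : ℕ∞ :=
  relDim R (fun N => Module.Projective R N) M

/-- The Gorenstein projective dimension of `M`:
the `𝒳`-Gorenstein projective dimension for `𝒳` the class of projective modules. -/
noncomputable def gpd (R : Type u) [Ring R] (M : ModuleCat.{u} R) : ℕ∞ :=
  xGpd R (fun N => Module.Projective R N) M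

namespace XCompleteResolution

variable {R : Type u} [Ring R] {𝒳 : ModuleCat.{u} R → Prop}

open Function LinearMap

/-- Factor a linear map through a surjection whose kernel it kills. -/
theorem factor_surj {M N Y : Type u} [AddCommGroup M] [AddCommGroup N] [AddCommGroup Y]
    [Module R M] [Module R N] [Module R Y]
    (p : M →ₗ[R] N) (hp : Function.Surjective p) (f : M →ₗ[R] Y)
    (h : LinearMap.ker p ≤ LinearMap.ker f) : ∃ g : N →ₗ[R] Y, g ∘ₗ p = f := by
  let e := LinearMap.quotKerEquivOfSurjective p hp
  refine ⟨(Submodule.liftQ _ f h) ∘ₗ (e.symm : N →ₗ[R] _), ?_⟩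
  ext x
  have he : e.symm (p x) = Submodule.Quotient.mk x := by
    apply e.injective
    simp only [LinearEquiv.apply_symm_apply]
    rfl
  simp only [LinearMap.comp_apply, LinearEquiv.coe_coe, he, Submodule.liftQ_apply]



variable (C : XCompleteResolution R 𝒳)

theorem range_d (n : ℤ) : LinearMap.range (C.d n) = LinearMap.ker (C.d (n+1)) :=
  (LinearMap.exact_iff.1 (C.exact n)).symm

/-- The corestriction of `d n` onto the next kernel. -/
noncomputable def sur (n : ℤ) : ↑(C.P n) →ₗ[R] (LinearMap.ker (C.d (n+1)) : Type u) :=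
  (C.d n).codRestrict _ (fun x => by rw [← C.range_d n]; exact ⟨x, rfl⟩)

@[simp] theorem sur_val (n : ℤ) (x : ↑(C.P n)) : ((C.sur n x : LinearMap.ker (C.d (n+1))) : ↑(C.P (n+1))) = C.d n x := rfl

theorem sur_surj (n : ℤ) : Function.Surjective (C.sur n) := by
  rintro ⟨y, hy⟩
  rw [← C.range_d n] at hy
  obtain ⟨x, hx⟩ := hy
  exact ⟨x, Subtype.ext hx⟩

theorem ker_sur (n : ℤ) : LinearMap.ker (C.sur n) = LinearMap.ker (C.d n) := by
  ext x
  simp only [LinearMap.mem_ker]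
  constructor
  · intro h; have := congrArg Subtype.val h; simpa using this
  · intro h; exact Subtype.ext (by simpa using h)

/-- cast between modules of the complex. -/
def mcast {x y : ℤ} (h : x = y) : ↑(C.P x) →ₗ[R] ↑(C.P y) := h ▸ LinearMap.id

@[simp] theorem mcast_rfl (x : ℤ) : C.mcast (rfl : x = x) = LinearMap.id := rfl

theorem mcast_inj {x y : ℤ} (h : x = y) : Function.Injective (C.mcast h) := by
  subst h; exact fun a b hab => hab

theorem mcast_mcast {x y : ℤ} (h : x = y) (v : ↑(C.P x)) :
    C.mcast h.symm (C.mcast h v) = v := by subst h; rfl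

theorem mem_ker_mcast {x y : ℤ} (h : x = y) (v : ↑(C.P x)) :
    C.mcast h v ∈ LinearMap.ker (C.d y) ↔ v ∈ LinearMap.ker (C.d x) := by
  subst h; rfl



end XCompleteResolution


namespace XCompleteResolution

variable {R : Type u} [Ring R] {𝒳 : ModuleCat.{u} R → Prop}

open Function LinearMap

/-- Extension property: every map from the `n`-th kernel into `Y` extends to `P n`. -/
def Ephi (Y : ModuleCat.{u} R) (C : XCompleteResolution R 𝒳) (n : ℤ) : Prop :=
  ∀ φ : (LinearMap.ker (C.d n) : Type u) →ₗ[R] ↑Y,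
    ∃ F : ↑(C.P n) →ₗ[R] ↑Y, F ∘ₗ (LinearMap.ker (C.d n)).subtype = φ

theorem ephi_of_mem (Y : ModuleCat.{u} R) (hY : 𝒳 Y) (C : XCompleteResolution R 𝒳)
    (n : ℤ) : Ephi Y C n := by
  obtain ⟨m, rfl⟩ : ∃ m, n = m + 1 + 1 := ⟨n - 2, by ring⟩
  intro φ
  have hg : (φ ∘ₗ C.sur (m+1)) ∘ₗ C.d m = 0 := by
    ext x
    have h1 : C.sur (m+1) (C.d m x) = 0 := by
      apply Subtype.ext
      have : C.d m x ∈ LinearMap.ker (C.d (m+1)) := by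
        rw [← C.range_d m]; exact ⟨x, rfl⟩
      simpa using this
    simp [LinearMap.comp_apply, h1]
  obtain ⟨F, hF⟩ := (C.homExact Y hY m (φ ∘ₗ C.sur (m+1))).1 hg
  refine ⟨F, ?_⟩
  ext y
  obtain ⟨w, rfl⟩ := C.sur_surj (m+1) y
  have : ((LinearMap.ker (C.d (m+1+1))).subtype) (C.sur (m+1) w) = C.d (m+1) w := rfl
  calc F (((LinearMap.ker (C.d (m+1+1))).subtype) (C.sur (m+1) w))
      = (F ∘ₗ C.d (m+1)) w := by rw [this]; rfl
    _ = (φ ∘ₗ C.sur (m+1)) w := by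
          have hF' : F ∘ₗ C.d (m+1) = φ ∘ₗ C.sur (m+1) := hF
          rw [hF']
    _ = φ (C.sur (m+1) w) := rfl

end XCompleteResolution


namespace XGPAux

open Function LinearMap XCompleteResolution

variable {R : Type u} [Ring R] {𝒳 : ModuleCat.{u} R → Prop}

/-- Data from which a complete resolution can be assembled. -/
structure CRData (R : Type u) [Ring R] (𝒳 : ModuleCat.{u} R → Prop) where
  P : ℤ → ModuleCat.{u} R
  T : ℤ → ModuleCat.{u} R
  m : ∀ n : ℤ, ↑(T n) →ₗ[R] ↑(P n)
  e : ∀ n : ℤ, ↑(P n) →ₗ[R] ↑(T (n+1))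
  proj : ∀ n, Module.Projective R (P n)
  hm : ∀ n, Function.Injective (m n)
  he : ∀ n, Function.Surjective (e n)
  hme : ∀ n, Function.Exact (m n) (e n)
  ext : ∀ (Y : ModuleCat.{u} R), 𝒳 Y → ∀ n (φ : ↑(T n) →ₗ[R] ↑Y),
    ∃ F : ↑(P n) →ₗ[R] ↑Y, F ∘ₗ m n = φ

namespace CRData

variable (D : CRData R 𝒳)

noncomputable def toXCR : XCompleteResolution R 𝒳 where
  P := D.P
  d := fun n => D.m (n+1) ∘ₗ D.e n
  projective := D.proj
  exact := by
    intro n y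
    constructor
    · intro h
      have h' : D.m (n+1+1) (D.e (n+1) y) = D.m (n+1+1) 0 := by
        rw [map_zero]; exact h
      have h1 : D.e (n+1) y = 0 := D.hm (n+1+1) h'
      obtain ⟨x, hx⟩ := (D.hme (n+1) y).1 h1
      obtain ⟨w, hw⟩ := D.he n x
      exact ⟨w, by simp [LinearMap.comp_apply, hw, hx]⟩
    · rintro ⟨w, rfl⟩
      have h1 : D.e (n+1) (D.m (n+1) (D.e n w)) = 0 :=
        (D.hme (n+1) _).2 ⟨D.e n w, rfl⟩
      show D.m (n+1+1) (D.e (n+1) ((D.m (n+1) ∘ₗ D.e n) w)) = 0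
      rw [LinearMap.comp_apply, h1, map_zero]
  homExact := by
    intro Y hY n
    intro f
    constructor
    · intro hf
      have hf' : f ∘ₗ (D.m (n+1) ∘ₗ D.e n) = 0 := hf
      have hf0 : ∀ x, f (D.m (n+1) x) = 0 := by
        intro x
        obtain ⟨w, hw⟩ := D.he n x
        have := congrFun (congrArg (fun (g : ↑(D.P n) →ₗ[R] ↑Y) => (g : ↑(D.P n) → ↑Y)) hf') w
        simpa [LinearMap.comp_apply, hw] using this
      obtain ⟨g, hg⟩ := XCompleteResolution.factor_surj (R := R) (D.e (n+1)) (D.he (n+1)) f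
        (by intro x hx
            obtain ⟨t, ht⟩ := (D.hme (n+1) x).1 hx
            rw [LinearMap.mem_ker, ← ht]; exact hf0 t)
      obtain ⟨F, hF⟩ := D.ext Y hY (n+1+1) g
      refine ⟨F, ?_⟩
      show F ∘ₗ (D.m (n+1+1) ∘ₗ D.e (n+1)) = f
      rw [← LinearMap.comp_assoc, hF, hg]
    · rintro ⟨F, rfl⟩
      show (F ∘ₗ (D.m (n+1+1) ∘ₗ D.e (n+1))) ∘ₗ (D.m (n+1) ∘ₗ D.e n) = 0
      ext w
      have h1 : D.e (n+1) (D.m (n+1) (D.e n w)) = 0 := (D.hme (n+1) _).2 ⟨D.e n w, rfl⟩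
      simp [LinearMap.comp_apply, h1]

noncomputable def kerEquiv : (LinearMap.ker (D.toXCR.d 0) : Type u) ≃ₗ[R] ↑(D.T 0) := by
  have hker : LinearMap.ker (D.toXCR.d 0) = LinearMap.range (D.m 0) := by
    ext x
    show D.m 1 (D.e 0 x) = 0 ↔ _
    constructor
    · intro h
      have h' : D.m 1 (D.e 0 x) = D.m 1 0 := by rw [map_zero]; exact h
      exact (D.hme 0 x).1 (D.hm 1 h')
    · intro hx
      have h1 : D.e 0 x = 0 := (D.hme 0 x).2 hx
      rw [h1, map_zero]
  rw [hker]
  exact (LinearEquiv.ofInjective (D.m 0) (D.hm 0)).symm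

theorem xgp (D : CRData R 𝒳) : XGorensteinProjective R 𝒳 (D.T 0) :=
  ⟨D.toXCR, ⟨D.kerEquiv.symm⟩⟩

end CRData

/-- Every kernel of a complete resolution is X-Gorenstein projective. -/
theorem xgp_ker (C : XCompleteResolution R 𝒳) (k : ℤ) :
    XGorensteinProjective R 𝒳 (ModuleCat.of R (LinearMap.ker (C.d k))) := by
  rw [show k = 0 + k from (zero_add k).symm]
  exact CRData.xgp {
    P := fun n => C.P (n + k)
    T := fun n => ModuleCat.of R (LinearMap.ker (C.d (n + k)))
    m := fun n => (LinearMap.ker (C.d (n + k))).subtype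
    e := fun n => LinearMap.codRestrict (LinearMap.ker (C.d (n+1+k)))
      (C.mcast (show n + k + 1 = n + 1 + k by ring) ∘ₗ C.d (n + k))
      (by intro x
          rw [LinearMap.comp_apply, C.mem_ker_mcast (show n + k + 1 = n + 1 + k by ring)]
          rw [← C.range_d (n+k)]; exact ⟨x, rfl⟩)
    proj := fun n => C.projective (n + k)
    hm := fun n => Subtype.val_injective
    he := by
      intro n
      rintro ⟨z, hz⟩
      have hv : C.mcast (show n+1+k = n+k+1 by ring) z ∈ LinearMap.ker (C.d (n+k+1)) :=
        (C.mem_ker_mcast (show n+1+k = n+k+1 by ring) z).2 hz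
      rw [← C.range_d (n+k)] at hv
      obtain ⟨x, hx⟩ := hv
      refine ⟨x, Subtype.ext ?_⟩
      show C.mcast (show n + k + 1 = n + 1 + k by ring) (C.d (n+k) x) = z
      rw [hx]
      exact C.mcast_mcast (show n+1+k = n+k+1 by ring) z
    hme := by
      intro n v
      constructor
      · intro h
        have h1 : C.mcast (show n + k + 1 = n + 1 + k by ring) (C.d (n+k) v) = 0 :=
          congrArg Subtype.val h
        have h2 : C.d (n+k) v = 0 := by
          apply C.mcast_inj (show n + k + 1 = n + 1 + k by ring)
          rw [h1, map_zero]
        exact ⟨⟨v, h2⟩, rfl⟩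
      · rintro ⟨⟨x, hx⟩, rfl⟩
        apply Subtype.ext
        show C.mcast (show n + k + 1 = n + 1 + k by ring) (C.d (n+k) x) = 0
        rw [show C.d (n+k) x = 0 from hx, map_zero]
    ext := fun Y hY n φ => ephi_of_mem Y hY C (n + k) φ }

end XGPAux


namespace XGPAux

open Function LinearMap XCompleteResolution

variable {R : Type u} [Ring R] {𝒳 : ModuleCat.{u} R → Prop}

theorem xgp_of_projective (Q : ModuleCat.{u} R) (hQ : Module.Projective R Q) :
    XGorensteinProjective R 𝒳 Q := by
  haveI := hQ
  exact CRData.xgp {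
    P := fun _ => ModuleCat.of R (↑Q × ↑Q)
    T := fun _ => Q
    m := fun _ => LinearMap.prod LinearMap.id 0
    e := fun _ => LinearMap.snd R ↑Q ↑Q
    proj := fun _ => (inferInstance : Module.Projective R (↑Q × ↑Q))
    hm := fun n q1 q2 h => by
      have := congrArg Prod.fst h; simpa using this
    he := fun n q => ⟨(0, q), rfl⟩
    hme := by
      intro n v
      constructor
      · intro h
        refine ⟨v.1, ?_⟩
        have h2 : v.2 = 0 := h
        show ((v.1 : ↑Q), (0 : ↑Q)) = v
        exact Prod.ext rfl h2.symm
      · rintro ⟨x, rfl⟩; rfl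
    ext := fun Y hY n φ => ⟨φ ∘ₗ LinearMap.fst R ↑Q ↑Q, LinearMap.ext fun x => rfl⟩ }

theorem exact_comp_zero {A B C : Type u} [AddCommGroup A] [AddCommGroup B] [AddCommGroup C]
    [Module R A] [Module R B] [Module R C] {ι : A →ₗ[R] B} {π : B →ₗ[R] C}
    (hex : Function.Exact ι π) (a : A) : π (ι a) = 0 := (hex _).2 ⟨a, rfl⟩

/-- The extension property holds for every module with a finite projective resolution. -/
theorem ephi_of_res (h𝒳 : ∀ P : ModuleCat.{u} R, Module.Projective R P → 𝒳 P) :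
    ∀ (k : ℕ) (Y K : ModuleCat.{u} R), Module.Projective R K →
      ResWithKernel R (fun N => Module.Projective R N) k K Y →
      ∀ (C : XCompleteResolution R 𝒳) (n : ℤ), Ephi Y C n := by
  intro k
  induction k with
  | zero =>
    intro Y K hK hres C n
    have hres' : Nonempty ((↑K : Type u) ≃ₗ[R] ↑Y) := hres
    obtain ⟨e⟩ := hres'
    haveI := hK
    haveI : Module.Projective R Y := Module.Projective.of_equiv e
    exact ephi_of_mem Y (h𝒳 Y this) C n
  | succ k IH =>
    intro Y K hK hres C n
    obtain ⟨Q, Y', f, σ, hQ, hf, hσ, hex, hres'⟩ := hres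
    obtain ⟨m, rfl⟩ : ∃ m, n = m + 1 + 1 := ⟨n - 2, by ring⟩
    intro φ
    haveI := C.projective (m+1)
    obtain ⟨ψ, hψ⟩ := Module.projective_lifting_property σ (φ ∘ₗ C.sur (m+1)) hσ
    have hmem : ∀ x : ↑(C.P (m+1)), x ∈ LinearMap.ker (C.d (m+1)) → ψ x ∈ LinearMap.range f := by
      intro x hx
      have h1 : σ (ψ x) = φ (C.sur (m+1) x) := LinearMap.congr_fun hψ x
      have h2 : C.sur (m+1) x = 0 := Subtype.ext (by simpa using hx)
      have h3 : σ (ψ x) = 0 := by rw [h1, h2, map_zero]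
      exact (hex (ψ x)).1 h3
    let eL := LinearEquiv.ofInjective f hf
    let ψ' : (LinearMap.ker (C.d (m+1)) : Type u) →ₗ[R] ↑Y' :=
      eL.symm.toLinearMap ∘ₗ LinearMap.codRestrict (LinearMap.range f)
        (ψ ∘ₗ (LinearMap.ker (C.d (m+1))).subtype) (fun x => hmem _ x.2)
    obtain ⟨θ, hθ⟩ := IH Y' K hK hres' C (m+1) ψ'
    have hfeL : ∀ w : LinearMap.range f, f (eL.symm w) = ↑w := by
      intro w
      have h1 : eL (eL.symm w) = w := eL.apply_symm_apply w
      have h2 : (↑(eL (eL.symm w)) : ↑Q) = ↑w := congrArg Subtype.val h1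
      rwa [LinearEquiv.ofInjective_apply] at h2
    have hker : LinearMap.ker (C.sur (m+1)) ≤ LinearMap.ker (ψ - f ∘ₗ θ) := by
      intro x hx
      rw [C.ker_sur] at hx
      have hθx : θ x = ψ' ⟨x, hx⟩ := LinearMap.congr_fun hθ ⟨x, hx⟩
      have : f (ψ' ⟨x, hx⟩) = ψ x := hfeL _
      simp only [LinearMap.mem_ker, LinearMap.sub_apply, LinearMap.comp_apply, hθx, this, sub_self]
    obtain ⟨ρ, hρ⟩ := factor_surj (C.sur (m+1)) (C.sur_surj _) _ hker
    have hσρ : σ ∘ₗ ρ = φ := by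
      ext y
      obtain ⟨w, rfl⟩ := C.sur_surj (m+1) y
      have h1 : ρ (C.sur (m+1) w) = ψ w - f (θ w) := LinearMap.congr_fun hρ w
      have h2 : σ (f (θ w)) = 0 := (hex _).2 ⟨θ w, rfl⟩
      have h3 : σ (ψ w) = φ (C.sur (m+1) w) := LinearMap.congr_fun hψ w
      simp only [LinearMap.comp_apply, h1, map_sub, h2, h3, sub_zero]
    obtain ⟨F₀, hF₀⟩ := ephi_of_mem Q (h𝒳 Q hQ) C (m+1+1) ρ
    exact ⟨σ ∘ₗ F₀, by rw [LinearMap.comp_assoc, hF₀, hσρ]⟩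

/-- Splitting of short exact sequences ending in a kernel of a complete resolution. -/
theorem split_of_ephi (C : XCompleteResolution R 𝒳) (n : ℤ) (Y E : ModuleCat.{u} R)
    (hY : ∀ n', Ephi Y C n')
    (ι : ↑Y →ₗ[R] ↑E) (π : ↑E →ₗ[R] (LinearMap.ker (C.d n) : Type u))
    (hι : Function.Injective ι) (hπ : Function.Surjective π) (hex : Function.Exact ι π) :
    ∃ s : (LinearMap.ker (C.d n) : Type u) →ₗ[R] ↑E, π ∘ₗ s = LinearMap.id := by
  obtain ⟨m, rfl⟩ : ∃ m, n = m + 1 + 1 := ⟨n - 2, by ring⟩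
  haveI := C.projective (m+1)
  obtain ⟨h, hh⟩ := Module.projective_lifting_property π (C.sur (m+1)) hπ
  have hmem : ∀ x : ↑(C.P (m+1)), x ∈ LinearMap.ker (C.d (m+1)) → h x ∈ LinearMap.range ι := by
    intro x hx
    have h1 : π (h x) = C.sur (m+1) x := LinearMap.congr_fun hh x
    have h2 : C.sur (m+1) x = 0 := Subtype.ext (by simpa using hx)
    exact (hex (h x)).1 (by rw [h1, h2])
  let eY := LinearEquiv.ofInjective ι hι
  let h' : (LinearMap.ker (C.d (m+1)) : Type u) →ₗ[R] ↑Y :=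
    eY.symm.toLinearMap ∘ₗ LinearMap.codRestrict (LinearMap.range ι)
      (h ∘ₗ (LinearMap.ker (C.d (m+1))).subtype) (fun x => hmem _ x.2)
  obtain ⟨θ, hθ⟩ := hY (m+1) h'
  have hieY : ∀ w : LinearMap.range ι, ι (eY.symm w) = ↑w := by
    intro w
    have h1 : (↑(eY (eY.symm w)) : ↑E) = ↑w := congrArg Subtype.val (eY.apply_symm_apply w)
    rwa [LinearEquiv.ofInjective_apply] at h1
  have hker : LinearMap.ker (C.sur (m+1)) ≤ LinearMap.ker (h - ι ∘ₗ θ) := by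
    intro x hx
    rw [C.ker_sur] at hx
    have hθx : θ x = h' ⟨x, hx⟩ := LinearMap.congr_fun hθ ⟨x, hx⟩
    have h2 : ι (h' ⟨x, hx⟩) = h x := hieY _
    simp only [LinearMap.mem_ker, LinearMap.sub_apply, LinearMap.comp_apply, hθx, h2, sub_self]
  obtain ⟨ρ, hρ⟩ := factor_surj (C.sur (m+1)) (C.sur_surj _) _ hker
  refine ⟨ρ, ?_⟩
  ext y
  obtain ⟨w, rfl⟩ := C.sur_surj (m+1) y
  have h1 : ρ (C.sur (m+1) w) = h w - ι (θ w) := LinearMap.congr_fun hρ w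
  have h2 : π (ι (θ w)) = 0 := exact_comp_zero hex _
  have h3 : π (h w) = C.sur (m+1) w := LinearMap.congr_fun hh w
  simp only [LinearMap.comp_apply, LinearMap.id_apply, h1, map_sub, h2, h3, sub_zero]

/-- Maps to a module with the extension property extend along injections with
cokernel a kernel of a complete resolution (pushout argument). -/
theorem extend_along (CC : XCompleteResolution R 𝒳) (c : ℤ)
    (A T Q : ModuleCat.{u} R) (hQ : ∀ n', Ephi Q CC n')
    (ι : ↑A →ₗ[R] ↑T) (π : ↑T →ₗ[R] (LinearMap.ker (CC.d c) : Type u))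
    (hι : Function.Injective ι) (hπ : Function.Surjective π) (hex : Function.Exact ι π)
    (f : ↑A →ₗ[R] ↑Q) : ∃ g : ↑T →ₗ[R] ↑Q, g ∘ₗ ι = f := by
  classical
  set ϕ : ↑A →ₗ[R] (↑Q × ↑T) := LinearMap.prod f (-ι) with hϕ
  set W : Submodule R (↑Q × ↑T) := LinearMap.range ϕ with hW
  let D := ModuleCat.of R ((↑Q × ↑T) ⧸ W)
  set mk : (↑Q × ↑T) →ₗ[R] ↑D := W.mkQ with hmk
  set jQ : ↑Q →ₗ[R] ↑D := mk ∘ₗ LinearMap.inl R ↑Q ↑T with hjQdef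
  have hmkker : ∀ v : ↑Q × ↑T, mk v = 0 ↔ v ∈ W := fun v => Submodule.Quotient.mk_eq_zero W
  have hjQ : Function.Injective jQ := by
    intro q1 q2 h12
    have h0 : jQ q1 - jQ q2 = 0 := by rw [h12, sub_self]
    have hsub : mk (q1 - q2, 0) = 0 := by
      have he : ((q1 - q2 : ↑Q), (0:↑T)) = ((q1, (0:↑T)) - (q2, 0)) := by
        ext <;> simp
      rw [he, map_sub]
      exact h0
    rw [hmkker] at hsub
    replace this := hsub
    obtain ⟨a, ha⟩ := this
    have ha1 : f a = q1 - q2 := congrArg Prod.fst ha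
    have ha2 : -ι a = 0 := congrArg Prod.snd ha
    have : a = 0 := hι (by rw [show ι a = 0 from by rw [← neg_neg (ι a), ha2, neg_zero], map_zero])
    have : q1 - q2 = 0 := by rw [← ha1, this, map_zero]
    exact sub_eq_zero.1 this
  have hWker : W ≤ LinearMap.ker (π ∘ₗ LinearMap.snd R ↑Q ↑T) := by
    rintro x ⟨a, rfl⟩
    simp only [LinearMap.mem_ker, LinearMap.comp_apply, hϕ, LinearMap.prod_apply, Pi.prod,
      LinearMap.snd_apply, LinearMap.neg_apply, map_neg]
    show π (-ι a) = 0
    rw [map_neg, exact_comp_zero hex a, neg_zero]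
  set πD : ↑D →ₗ[R] (LinearMap.ker (CC.d c) : Type u) :=
    Submodule.liftQ W (π ∘ₗ LinearMap.snd R ↑Q ↑T) hWker with hπDdef
  have hπDmk : ∀ v : ↑Q × ↑T, πD (mk v) = π v.2 := fun v => rfl
  have hπDs : Function.Surjective πD := by
    intro z
    obtain ⟨t, ht⟩ := hπ z
    exact ⟨mk (0, t), by rw [hπDmk]; exact ht⟩
  have hexD : Function.Exact jQ πD := by
    intro y
    obtain ⟨v, rfl⟩ := W.mkQ_surjective y
    rw [show W.mkQ v = mk v from rfl, hπDmk]
    constructor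
    · intro h0
      obtain ⟨a, ha⟩ := (hex v.2).1 h0
      refine ⟨v.1 + f a, ?_⟩
      show mk (v.1 + f a, 0) = mk v
      refine (Submodule.Quotient.eq W).2 ⟨a, ?_⟩
      rw [hϕ]
      ext
      · simp
      · simp [← ha]
    · rintro ⟨q, hq⟩
      have h2 : πD (jQ q) = 0 := by
        show πD (mk (q, 0)) = 0
        rw [hπDmk]
        exact map_zero π
      have h3 := congrArg πD hq
      calc π v.2 = πD (mk v) := (hπDmk v).symm
        _ = πD (jQ q) := h3.symm
        _ = 0 := h2
  obtain ⟨s, hs⟩ := split_of_ephi CC c Q D hQ jQ πD hjQ hπDs hexD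
  let eJ := LinearEquiv.ofInjective jQ hjQ
  have hsmem : ∀ x : ↑D, x - s (πD x) ∈ LinearMap.range jQ := by
    intro x
    apply (hexD _).1
    have h1 : πD (s (πD x)) = πD x := LinearMap.congr_fun hs (πD x)
    rw [map_sub, h1, sub_self]
  let r : ↑D →ₗ[R] ↑Q := eJ.symm.toLinearMap ∘ₗ
    LinearMap.codRestrict (LinearMap.range jQ) (LinearMap.id - s ∘ₗ πD) (fun x => hsmem x)
  have hjeJ : ∀ w : LinearMap.range jQ, jQ (eJ.symm w) = ↑w := by
    intro w
    have h1 : (↑(eJ (eJ.symm w)) : ↑D) = ↑w := congrArg Subtype.val (eJ.apply_symm_apply w)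
    rwa [LinearEquiv.ofInjective_apply] at h1
  have h4 : ∀ x : ↑D, jQ (r x) = x - s (πD x) := by
    intro x
    exact hjeJ ⟨(LinearMap.id - s ∘ₗ πD : ↑D →ₗ[R] ↑D) x, hsmem x⟩
  have hrjQ : ∀ q, r (jQ q) = q := by
    intro q
    have h0 : πD (jQ q) = 0 := exact_comp_zero hexD q
    apply hjQ
    rw [h4, h0, map_zero, sub_zero]
  refine ⟨r ∘ₗ mk ∘ₗ LinearMap.inr R ↑Q ↑T, ?_⟩
  ext a
  have hmkeq : mk (0, ι a) = mk (f a, 0) := by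
    refine (Submodule.Quotient.eq W).2 ⟨-a, ?_⟩
    rw [hϕ]
    ext <;> simp
  show r (mk (0, ι a)) = f a
  rw [hmkeq]
  exact hrjQ (f a)

end XGPAux


namespace XGPAux

open Function LinearMap XCompleteResolution

variable {R : Type u} [Ring R] {𝒳 : ModuleCat.{u} R → Prop}

/-- One level of the horseshoe construction: an extension of a kernel of `CC`
by a kernel of `CA`, embedded in the product of the ambient projectives. -/
structure ExtSES (CA CC : XCompleteResolution R 𝒳) (a c : ℤ) where
  T : ModuleCat.{u} R
  ι : (LinearMap.ker (CA.d a) : Type u) →ₗ[R] ↑T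
  π : ↑T →ₗ[R] (LinearMap.ker (CC.d c) : Type u)
  m : ↑T →ₗ[R] (↑(CA.P a) × ↑(CC.P c))
  hι : Function.Injective ι
  hπ : Function.Surjective π
  hexact : Function.Exact ι π
  hm : Function.Injective m
  hmι : ∀ x, m (ι x) = ((LinearMap.ker (CA.d a)).subtype x, 0)
  hm2 : ∀ t, (m t).2 = (LinearMap.ker (CC.d c)).subtype (π t)

variable {CA CC : XCompleteResolution R 𝒳}

/-- Maps out of the middle of an `ExtSES` into a module with the extension
property extend to the ambient product. -/
theorem ExtSES.extend {a c : ℤ} (X : ExtSES CA CC a c) (Y : ModuleCat.{u} R)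
    (hYA : Ephi Y CA a) (hYC : Ephi Y CC c) (φ : ↑X.T →ₗ[R] ↑Y) :
    ∃ F : (↑(CA.P a) × ↑(CC.P c)) →ₗ[R] ↑Y, F ∘ₗ X.m = φ := by
  obtain ⟨α, hα⟩ := hYA (φ ∘ₗ X.ι)
  set ψ₀ : ↑X.T →ₗ[R] ↑Y := φ - (α ∘ₗ LinearMap.fst R _ _ ∘ₗ X.m) with hψ₀
  have hker : LinearMap.ker X.π ≤ LinearMap.ker ψ₀ := by
    intro x hx
    obtain ⟨u, rfl⟩ := (X.hexact x).1 hx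
    have h1 : (X.m (X.ι u)).1 = (LinearMap.ker (CA.d a)).subtype u := by rw [X.hmι]
    have h2 : α ((LinearMap.ker (CA.d a)).subtype u) = φ (X.ι u) := LinearMap.congr_fun hα u
    simp only [LinearMap.mem_ker, hψ₀, LinearMap.sub_apply, LinearMap.comp_apply,
      LinearMap.fst_apply, h1, h2, sub_self]
  obtain ⟨ψ, hψ⟩ := factor_surj X.π X.hπ ψ₀ hker
  obtain ⟨γ, hγ⟩ := hYC ψ
  refine ⟨α ∘ₗ LinearMap.fst R _ _ + γ ∘ₗ LinearMap.snd R _ _, ?_⟩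
  ext t
  have h3 : γ ((X.m t).2) = ψ (X.π t) := by
    rw [X.hm2]
    exact LinearMap.congr_fun hγ (X.π t)
  have h4 : ψ (X.π t) = ψ₀ t := LinearMap.congr_fun hψ t
  simp only [LinearMap.comp_apply, LinearMap.add_apply, LinearMap.fst_apply,
    LinearMap.snd_apply, h3, h4, hψ₀, LinearMap.sub_apply]
  abel

/-- A link between consecutive levels of the horseshoe construction. -/
structure ESLink {a c a' c' : ℤ} (X : ExtSES CA CC a c) (X' : ExtSES CA CC a' c') where
  e : (↑(CA.P a) × ↑(CC.P c)) →ₗ[R] ↑X'.T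
  he : Function.Surjective e
  hme : Function.Exact X.m e

theorem rightStep (h𝒳 : ∀ P : ModuleCat.{u} R, Module.Projective R P → 𝒳 P)
    {a c : ℤ} (X : ExtSES CA CC a c) :
    ∃ X' : ExtSES CA CC (a+1) (c+1), Nonempty (ESLink X X') := by
  classical
  set W : Submodule R (↑(CA.P a) × ↑(CC.P c)) := LinearMap.range X.m with hWdef
  let T' := ModuleCat.of R ((↑(CA.P a) × ↑(CC.P c)) ⧸ W)
  set mk : (↑(CA.P a) × ↑(CC.P c)) →ₗ[R] ↑T' := W.mkQ with hmkdef
  set φ₁ : ↑(CA.P a) →ₗ[R] ↑T' := mk ∘ₗ LinearMap.inl R _ _ with hφ₁def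
  have hφ₁mk : ∀ x, φ₁ x = mk (x, 0) := fun x => rfl
  have hkerφ₁ : ∀ x, φ₁ x = 0 ↔ x ∈ LinearMap.ker (CA.d a) := by
    intro x
    constructor
    · intro h
      have h1 : ((x, 0) : ↑(CA.P a) × ↑(CC.P c)) ∈ W := (Submodule.Quotient.mk_eq_zero W).1 h
      obtain ⟨t, ht⟩ := h1
      have h2 : ((LinearMap.ker (CC.d c)).subtype) (X.π t) = 0 := by
        rw [← X.hm2]; exact congrArg Prod.snd ht
      have h3 : X.π t = 0 := Subtype.val_injective h2
      obtain ⟨u, hu⟩ := (X.hexact t).1 h3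
      have h4 : (X.m t).1 = x := congrArg Prod.fst ht
      rw [← hu, X.hmι] at h4
      simp only [← h4]
      exact u.2
    · intro hx
      have h1 : ((x, 0) : ↑(CA.P a) × ↑(CC.P c)) = X.m (X.ι ⟨x, hx⟩) := (X.hmι ⟨x, hx⟩).symm
      rw [hφ₁mk, h1]
      exact (Submodule.Quotient.mk_eq_zero W).2 ⟨X.ι ⟨x, hx⟩, rfl⟩
  obtain ⟨ι', hι'⟩ := factor_surj (CA.sur a) (CA.sur_surj a) φ₁
    (by intro x hx
        rw [CA.ker_sur] at hx
        exact (hkerφ₁ x).2 hx)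
  have hι'sur : ∀ z, ι' (CA.sur a z) = φ₁ z := LinearMap.congr_fun hι'
  have hι'inj : Function.Injective ι' := by
    intro z1 z2 h12
    obtain ⟨y1, rfl⟩ := CA.sur_surj a z1
    obtain ⟨y2, rfl⟩ := CA.sur_surj a z2
    rw [hι'sur, hι'sur] at h12
    have h1 : φ₁ (y1 - y2) = 0 := by rw [map_sub, h12, sub_self]
    have h2 : y1 - y2 ∈ LinearMap.ker (CA.d a) := (hkerφ₁ _).1 h1
    have h3 : CA.sur a (y1 - y2) = 0 := Subtype.ext h2
    rw [map_sub] at h3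
    exact sub_eq_zero.1 h3
  have hWπ : W ≤ LinearMap.ker (CC.sur c ∘ₗ LinearMap.snd R _ _) := by
    rintro x ⟨t, rfl⟩
    have h1 : (X.m t).2 = (LinearMap.ker (CC.d c)).subtype (X.π t) := X.hm2 t
    simp only [LinearMap.mem_ker, LinearMap.comp_apply, LinearMap.snd_apply, h1]
    apply Subtype.ext
    exact (X.π t).2
  set π' : ↑T' →ₗ[R] (LinearMap.ker (CC.d (c+1)) : Type u) :=
    Submodule.liftQ W (CC.sur c ∘ₗ LinearMap.snd R _ _) hWπ with hπ'def
  have hπ'mk : ∀ v : ↑(CA.P a) × ↑(CC.P c), π' (mk v) = CC.sur c v.2 := fun v => rfl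
  have hπ's : Function.Surjective π' := by
    intro z
    obtain ⟨q, hq⟩ := CC.sur_surj c z
    exact ⟨mk (0, q), by rw [hπ'mk]; exact hq⟩
  have hexact' : Function.Exact ι' π' := by
    intro y
    obtain ⟨v, rfl⟩ := W.mkQ_surjective y
    rw [show W.mkQ v = mk v from rfl]
    constructor
    · intro h0
      rw [hπ'mk] at h0
      have h1 : v.2 ∈ LinearMap.ker (CC.d c) := by
        have := congrArg Subtype.val h0
        simpa using this
      obtain ⟨t, ht⟩ := X.hπ ⟨v.2, h1⟩
      refine ⟨CA.sur a (v.1 - (X.m t).1), ?_⟩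
      rw [hι'sur, hφ₁mk]
      refine (Submodule.Quotient.eq W).2 ⟨-t, ?_⟩
      rw [map_neg]
      have hmt2 : (X.m t).2 = v.2 := by
        rw [X.hm2, ht]
        rfl
      ext
      · simp
      · simp [hmt2]
    · rintro ⟨z, hz⟩
      obtain ⟨y1, rfl⟩ := CA.sur_surj a z
      rw [hι'sur, hφ₁mk] at hz
      rw [← hz, hπ'mk]
      exact map_zero _
  haveI := CA.projective (a+1)
  obtain ⟨W1, hW1⟩ := extend_along CC (c+1) (ModuleCat.of R (LinearMap.ker (CA.d (a+1)))) T'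
    (CA.P (a+1)) (fun n' => ephi_of_mem _ (h𝒳 _ (CA.projective (a+1))) CC n')
    ι' π' hι'inj hπ's hexact' ((LinearMap.ker (CA.d (a+1))).subtype)
  have hW1ι' : ∀ x, W1 (ι' x) = (LinearMap.ker (CA.d (a+1))).subtype x :=
    LinearMap.congr_fun hW1
  refine ⟨{
    T := T'
    ι := ι'
    π := π'
    m := LinearMap.prod W1 ((LinearMap.ker (CC.d (c+1))).subtype ∘ₗ π')
    hι := hι'inj
    hπ := hπ's
    hexact := hexact'
    hm := ?_
    hmι := ?_
    hm2 := fun t => rfl }, ⟨{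
      e := mk
      he := W.mkQ_surjective
      hme := ?_ }⟩⟩
  · -- hm
    intro t1 t2 h12
    have h1 : W1 t1 = W1 t2 := congrArg Prod.fst h12
    have h2 : (LinearMap.ker (CC.d (c+1))).subtype (π' t1) =
        (LinearMap.ker (CC.d (c+1))).subtype (π' t2) := congrArg Prod.snd h12
    have h3 : π' (t1 - t2) = 0 := by
      rw [map_sub, sub_eq_zero]
      exact Subtype.val_injective h2
    obtain ⟨z, hz⟩ := (hexact' (t1 - t2)).1 h3
    have h4 : W1 (t1 - t2) = 0 := by rw [map_sub, h1, sub_self]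
    rw [← hz, hW1ι'] at h4
    have h5 : z = 0 := Subtype.val_injective h4
    rw [h5, map_zero] at hz
    exact sub_eq_zero.1 hz.symm
  · -- hmι
    intro x
    have h1 : π' (ι' x) = 0 := exact_comp_zero hexact' x
    show (W1 (ι' x), (LinearMap.ker (CC.d (c+1))).subtype (π' (ι' x))) = _
    rw [hW1ι', h1]
    rfl
  · -- hme : Exact X.m mk
    intro v
    rw [show mk v = 0 ↔ v ∈ W from Submodule.Quotient.mk_eq_zero W]
    constructor
    · rintro ⟨t, ht⟩; exact ⟨t, ht⟩
    · rintro ⟨t, ht⟩; exact ⟨t, ht⟩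

theorem leftStep (h𝒳 : ∀ P : ModuleCat.{u} R, Module.Projective R P → 𝒳 P)
    {a c : ℤ} (X' : ExtSES CA CC (a+1) (c+1)) :
    ∃ X : ExtSES CA CC a c, Nonempty (ESLink X X') := by
  classical
  haveI := CC.projective c
  obtain ⟨lamC, hlamC⟩ := Module.projective_lifting_property X'.π (CC.sur c) X'.hπ
  have hlamCap : ∀ q, X'.π (lamC q) = CC.sur c q := LinearMap.congr_fun hlamC
  set e : (↑(CA.P a) × ↑(CC.P c)) →ₗ[R] ↑X'.T :=
    X'.ι ∘ₗ CA.sur a ∘ₗ LinearMap.fst R _ _ + lamC ∘ₗ LinearMap.snd R _ _ with hedef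
  have heap : ∀ v : ↑(CA.P a) × ↑(CC.P c), e v = X'.ι (CA.sur a v.1) + lamC v.2 := fun v => rfl
  have hes : Function.Surjective e := by
    intro t
    obtain ⟨q, hq⟩ := CC.sur_surj c (X'.π t)
    have h1 : X'.π (t - lamC q) = 0 := by
      rw [map_sub, hlamCap, hq, sub_self]
    obtain ⟨u, hu⟩ := (X'.hexact _).1 h1
    obtain ⟨p, hp⟩ := CA.sur_surj a u
    refine ⟨(p, q), ?_⟩
    rw [heap]
    show X'.ι (CA.sur a p) + lamC q = t
    rw [hp, hu]
    abel
  set TK := ModuleCat.of R (LinearMap.ker e) with hTKdef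
  have hιmem : ∀ x : (LinearMap.ker (CA.d a) : Type u),
      (LinearMap.prod ((LinearMap.ker (CA.d a)).subtype) (0 : _ →ₗ[R] ↑(CC.P c))) x ∈
        LinearMap.ker e := by
    intro x
    have h1 : CA.sur a ((LinearMap.ker (CA.d a)).subtype x) = 0 := by
      apply Subtype.ext
      exact x.2
    simp only [LinearMap.mem_ker, LinearMap.prod_apply, Pi.prod, LinearMap.zero_apply]
    rw [heap]
    show X'.ι (CA.sur a ((LinearMap.ker (CA.d a)).subtype x)) + lamC 0 = 0
    rw [h1, map_zero, map_zero, add_zero]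
  set ι₀ : (LinearMap.ker (CA.d a) : Type u) →ₗ[R] ↑TK :=
    LinearMap.codRestrict (LinearMap.ker e) _ hιmem with hι₀def
  have hπmem : ∀ v : ↑TK, ((LinearMap.snd R _ _) ∘ₗ (LinearMap.ker e).subtype) v ∈
      LinearMap.ker (CC.d c) := by
    rintro ⟨v, hv⟩
    have h1 : X'.π (e v) = 0 := by rw [show e v = 0 from hv, map_zero]
    rw [heap, map_add, exact_comp_zero X'.hexact, zero_add, hlamCap] at h1
    have h2 := congrArg Subtype.val h1
    simpa using h2
  set π₀ : ↑TK →ₗ[R] (LinearMap.ker (CC.d c) : Type u) :=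
    LinearMap.codRestrict (LinearMap.ker (CC.d c)) _ hπmem with hπ₀def
  refine ⟨{
    T := TK
    ι := ι₀
    π := π₀
    m := (LinearMap.ker e).subtype
    hι := ?_
    hπ := ?_
    hexact := ?_
    hm := Subtype.val_injective
    hmι := fun x => rfl
    hm2 := fun t => rfl }, ⟨{
      e := e
      he := hes
      hme := ?_ }⟩⟩
  · -- hι
    intro x1 x2 h12
    have h1 := congrArg (fun z => (((LinearMap.ker e).subtype) z).1) h12
    exact Subtype.val_injective h1
  · -- hπ surjective
    rintro ⟨q, hq⟩
    have h1 : X'.π (lamC q) = 0 := by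
      rw [hlamCap]
      exact Subtype.ext hq
    obtain ⟨u, hu⟩ := (X'.hexact _).1 h1
    obtain ⟨p, hp⟩ := CA.sur_surj a u
    have hmem : ((-p, q) : ↑(CA.P a) × ↑(CC.P c)) ∈ LinearMap.ker e := by
      simp only [LinearMap.mem_ker]
      rw [heap]
      show X'.ι (CA.sur a (-p)) + lamC q = 0
      rw [map_neg, map_neg, hp, hu]
      abel
    exact ⟨⟨(-p, q), hmem⟩, rfl⟩
  · -- hexact
    rintro ⟨⟨p, q⟩, hv⟩
    constructor
    · intro h0
      have hq0 : q = 0 := congrArg Subtype.val h0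
      have h1 : e (p, q) = 0 := hv
      rw [heap] at h1
      subst hq0
      rw [map_zero, add_zero] at h1
      have h2 : CA.sur a p = 0 := by
        apply X'.hι
        rw [map_zero]
        exact h1
      have h3 : p ∈ LinearMap.ker (CA.d a) := by
        rw [← CA.ker_sur]
        exact h2
      refine ⟨⟨p, h3⟩, ?_⟩
      apply Subtype.ext
      rfl
    · rintro ⟨x, hx⟩
      have h1 := congrArg (fun z => (((LinearMap.ker e).subtype) z).2) hx
      apply Subtype.ext
      show q = 0
      exact (show (0 : ↑(CC.P c)) = q from h1).symm
  · -- hme : Exact subtype e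
    intro v
    constructor
    · intro hv
      exact ⟨⟨v, hv⟩, rfl⟩
    · rintro ⟨⟨w, hw⟩, rfl⟩
      exact hw

end XGPAux


namespace XGPAux

open Function LinearMap XCompleteResolution

variable {R : Type u} [Ring R] {𝒳 : ModuleCat.{u} R → Prop} {CA CC : XCompleteResolution R 𝒳}

def ExtSES.castE {a a' c c' : ℤ} (h1 : a = a') (h2 : c = c') (X : ExtSES CA CC a c) :
    ExtSES CA CC a' c' := h1 ▸ h2 ▸ X

theorem ExtSES.castE_T {a a' c c' : ℤ} (h1 : a = a') (h2 : c = c') (X : ExtSES CA CC a c) :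
    (X.castE h1 h2).T = X.T := by subst h1; subst h2; rfl

theorem ExtSES.castE_heq {a a' c c' : ℤ} (h1 : a = a') (h2 : c = c') (X : ExtSES CA CC a c) :
    HEq (X.castE h1 h2) X := by subst h1; subst h2; rfl

theorem eslink_hcongr {a c b e a' c' b' e' : ℤ}
    {X : ExtSES CA CC a c} {Y : ExtSES CA CC b e}
    {X' : ExtSES CA CC a' c'} {Y' : ExtSES CA CC b' e'}
    (ha : a = a') (hc : c = c') (hb : b = b') (hee : e = e')
    (hX : HEq X X') (hY : HEq Y Y') :
    Nonempty (ESLink X Y) → Nonempty (ESLink X' Y') := by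
  subst ha; subst hc; subst hb; subst hee
  rw [eq_of_heq hX, eq_of_heq hY]
  exact id

section Chains

variable (h𝒳 : ∀ P : ModuleCat.{u} R, Module.Projective R P → 𝒳 P)
variable (X₀ : ExtSES CA CC 0 0)

noncomputable def Rchain : (j : ℕ) → ExtSES CA CC (j : ℤ) (j : ℤ) :=
  Nat.rec (X₀.castE (by simp) (by simp))
    (fun j X => (Classical.choose (rightStep h𝒳 X)).castE (by push_cast; ring) (by push_cast; ring))

theorem Rchain_zero : Rchain h𝒳 X₀ 0 = X₀.castE (by simp) (by simp) := rfl

theorem Rchain_succ (j : ℕ) : Rchain h𝒳 X₀ (j+1)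
    = (Classical.choose (rightStep h𝒳 (Rchain h𝒳 X₀ j))).castE
      (by push_cast; ring) (by push_cast; ring) := rfl

theorem Rchain_congr {j j' : ℕ} (h : j = j') :
    HEq (Rchain h𝒳 X₀ j) (Rchain h𝒳 X₀ j') := by subst h; rfl

theorem Rlink (j : ℕ) :
    Nonempty (ESLink (Rchain h𝒳 X₀ j) (Rchain h𝒳 X₀ (j+1))) := by
  rw [Rchain_succ]
  have h := Classical.choose_spec (rightStep h𝒳 (Rchain h𝒳 X₀ j))
  exact eslink_hcongr rfl rfl (by push_cast; ring) (by push_cast; ring) HEq.rfl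
    (ExtSES.castE_heq _ _ _).symm h

noncomputable def Lchain : (j : ℕ) → ExtSES CA CC (-(j : ℤ)) (-(j : ℤ)) :=
  Nat.rec (X₀.castE (by simp) (by simp))
    (fun j X => Classical.choose
      (leftStep h𝒳 (X.castE (show -(j:ℤ) = -((j+1:ℕ):ℤ) + 1 by push_cast; ring)
        (show -(j:ℤ) = -((j+1:ℕ):ℤ) + 1 by push_cast; ring))))

theorem Lchain_zero : Lchain h𝒳 X₀ 0 = X₀.castE (by simp) (by simp) := rfl

theorem Lchain_succ (j : ℕ) : Lchain h𝒳 X₀ (j+1)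
    = Classical.choose
      (leftStep h𝒳 ((Lchain h𝒳 X₀ j).castE (show -(j:ℤ) = -((j+1:ℕ):ℤ) + 1 by push_cast; ring)
        (show -(j:ℤ) = -((j+1:ℕ):ℤ) + 1 by push_cast; ring))) := rfl

theorem Lchain_congr {j j' : ℕ} (h : j = j') :
    HEq (Lchain h𝒳 X₀ j) (Lchain h𝒳 X₀ j') := by subst h; rfl

theorem Llink (j : ℕ) :
    Nonempty (ESLink (Lchain h𝒳 X₀ (j+1)) (Lchain h𝒳 X₀ j)) := by
  rw [Lchain_succ]
  have h := Classical.choose_spec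
    (leftStep h𝒳 ((Lchain h𝒳 X₀ j).castE
      (show -(j:ℤ) = -((j+1:ℕ):ℤ) + 1 by push_cast; ring)
      (show -(j:ℤ) = -((j+1:ℕ):ℤ) + 1 by push_cast; ring)))
  exact eslink_hcongr rfl rfl (by push_cast; ring) (by push_cast; ring) HEq.rfl
    (ExtSES.castE_heq _ _ _) h

theorem heq_castE_of_heq {a c a' c' b e : ℤ} {X : ExtSES CA CC a c} {Y : ExtSES CA CC a' c'}
    (h : HEq X Y) (h1 : a' = b) (h2 : c' = e) : HEq X (Y.castE h1 h2) :=
  h.trans (ExtSES.castE_heq h1 h2 Y).symm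

noncomputable def Schain (n : ℤ) : ExtSES CA CC n n :=
  if h : 0 ≤ n then (Rchain h𝒳 X₀ n.toNat).castE (by omega) (by omega)
  else (Lchain h𝒳 X₀ (-n).toNat).castE (by omega) (by omega)

theorem Slink (n : ℤ) :
    Nonempty (ESLink (Schain h𝒳 X₀ n) (Schain h𝒳 X₀ (n+1))) := by
  by_cases h : 0 ≤ n
  · have e1 : Schain h𝒳 X₀ n
        = (Rchain h𝒳 X₀ n.toNat).castE (by omega) (by omega) := dif_pos h
    have e2 : Schain h𝒳 X₀ (n+1)
        = (Rchain h𝒳 X₀ (n+1).toNat).castE (by omega) (by omega) := dif_pos (by omega)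
    have hXheq : HEq (Rchain h𝒳 X₀ n.toNat) (Schain h𝒳 X₀ n) := by
      rw [e1]; exact (ExtSES.castE_heq _ _ _).symm
    have hj : (n+1).toNat = n.toNat + 1 := by omega
    have hYheq : HEq (Rchain h𝒳 X₀ (n.toNat + 1)) (Schain h𝒳 X₀ (n+1)) := by
      rw [e2]
      exact heq_castE_of_heq (Rchain_congr h𝒳 X₀ hj.symm) _ _
    exact eslink_hcongr (by omega) (by omega) (by omega) (by omega) hXheq hYheq
      (Rlink h𝒳 X₀ n.toNat)
  · have e1 : Schain h𝒳 X₀ n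
        = (Lchain h𝒳 X₀ (-n).toNat).castE (by omega) (by omega) := dif_neg h
    obtain ⟨j', hj'⟩ : ∃ j', (-n).toNat = j' + 1 := ⟨(-n).toNat - 1, by omega⟩
    have hXheq : HEq (Lchain h𝒳 X₀ (j' + 1)) (Schain h𝒳 X₀ n) := by
      rw [e1]
      exact heq_castE_of_heq (Lchain_congr h𝒳 X₀ hj'.symm) _ _
    by_cases h2 : 0 ≤ n + 1
    · have e2 : Schain h𝒳 X₀ (n+1)
          = (Rchain h𝒳 X₀ (n+1).toNat).castE (by omega) (by omega) := dif_pos h2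
      have h0 : (n+1).toNat = 0 := by omega
      have hj'0 : j' = 0 := by omega
      subst hj'0
      have hLR : HEq (Lchain h𝒳 X₀ 0) (Rchain h𝒳 X₀ 0) := by
        rw [Lchain_zero, Rchain_zero]
      have hYheq : HEq (Lchain h𝒳 X₀ 0) (Schain h𝒳 X₀ (n+1)) := by
        rw [e2]
        exact heq_castE_of_heq (hLR.trans (Rchain_congr h𝒳 X₀ h0.symm)) _ _
      exact eslink_hcongr (by omega) (by omega) (by omega) (by omega) hXheq hYheq
        (Llink h𝒳 X₀ 0)
    · have e2 : Schain h𝒳 X₀ (n+1)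
          = (Lchain h𝒳 X₀ (-(n+1)).toNat).castE (by omega) (by omega) := dif_neg h2
      have hj2 : (-(n+1)).toNat = j' := by omega
      have hYheq : HEq (Lchain h𝒳 X₀ j') (Schain h𝒳 X₀ (n+1)) := by
        rw [e2]
        exact heq_castE_of_heq (Lchain_congr h𝒳 X₀ hj2.symm) _ _
      exact eslink_hcongr (by omega) (by omega) (by omega) (by omega) hXheq hYheq
        (Llink h𝒳 X₀ j')

noncomputable def closureCR : CRData R 𝒳 where
  P := fun n => ModuleCat.of R (↑(CA.P n) × ↑(CC.P n))
  T := fun n => (Schain h𝒳 X₀ n).T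
  m := fun n => (Schain h𝒳 X₀ n).m
  e := fun n => (Classical.choice (Slink h𝒳 X₀ n)).e
  proj := fun n => by
    haveI := CA.projective n
    haveI := CC.projective n
    exact (inferInstance : Module.Projective R (↑(CA.P n) × ↑(CC.P n)))
  hm := fun n => (Schain h𝒳 X₀ n).hm
  he := fun n => (Classical.choice (Slink h𝒳 X₀ n)).he
  hme := fun n => (Classical.choice (Slink h𝒳 X₀ n)).hme
  ext := fun Y hY n φ => (Schain h𝒳 X₀ n).extend Y
    (ephi_of_mem Y hY CA n) (ephi_of_mem Y hY CC n) φ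

end Chains

/-- The class of X-Gorenstein projective modules is closed under extensions. -/
theorem xgp_extension (h𝒳 : ∀ P : ModuleCat.{u} R, Module.Projective R P → 𝒳 P)
    {A B C' : ModuleCat.{u} R}
    (hA : XGorensteinProjective R 𝒳 A) (hC : XGorensteinProjective R 𝒳 C')
    (ι : ↑A →ₗ[R] ↑B) (π : ↑B →ₗ[R] ↑C')
    (hι : Function.Injective ι) (hπ : Function.Surjective π)
    (hex : Function.Exact ι π) :
    XGorensteinProjective R 𝒳 B := by
  obtain ⟨CA, ⟨eA⟩⟩ := hA
  obtain ⟨CC, ⟨eC⟩⟩ := hC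
  set ι₀ : (LinearMap.ker (CA.d 0) : Type u) →ₗ[R] ↑B := ι ∘ₗ eA.symm.toLinearMap with hι₀def
  set π₀ : ↑B →ₗ[R] (LinearMap.ker (CC.d 0) : Type u) := eC.toLinearMap ∘ₗ π with hπ₀def
  have hι₀ : Function.Injective ι₀ := hι.comp eA.symm.injective
  have hπ₀ : Function.Surjective π₀ := eC.surjective.comp hπ
  have hex₀ : Function.Exact ι₀ π₀ := by
    intro b
    constructor
    · intro h0
      have h1 : π b = 0 := by
        have h2 : eC (π b) = 0 := h0
        exact (LinearEquiv.map_eq_zero_iff eC).1 h2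
      obtain ⟨a0, ha0⟩ := (hex b).1 h1
      refine ⟨eA a0, ?_⟩
      show ι (eA.symm (eA a0)) = b
      rw [eA.symm_apply_apply]
      exact ha0
    · rintro ⟨x, rfl⟩
      show eC (π (ι (eA.symm x))) = 0
      rw [exact_comp_zero hex, map_zero]
  obtain ⟨wA, hwA⟩ := extend_along CC 0 (ModuleCat.of R (LinearMap.ker (CA.d 0))) B (CA.P 0)
    (fun n' => ephi_of_mem _ (h𝒳 _ (CA.projective 0)) CC n') ι₀ π₀ hι₀ hπ₀ hex₀
    ((LinearMap.ker (CA.d 0)).subtype)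
  have hwAa : ∀ x, wA (ι₀ x) = (LinearMap.ker (CA.d 0)).subtype x := LinearMap.congr_fun hwA
  set X₀ : ExtSES CA CC 0 0 := {
    T := B
    ι := ι₀
    π := π₀
    m := LinearMap.prod wA ((LinearMap.ker (CC.d 0)).subtype ∘ₗ π₀)
    hι := hι₀
    hπ := hπ₀
    hexact := hex₀
    hm := by
      intro t1 t2 h12
      have h1 : wA t1 = wA t2 := congrArg Prod.fst h12
      have h2 : (LinearMap.ker (CC.d 0)).subtype (π₀ t1) =
          (LinearMap.ker (CC.d 0)).subtype (π₀ t2) := congrArg Prod.snd h12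
      have h3 : π₀ (t1 - t2) = 0 := by
        rw [map_sub, sub_eq_zero]
        exact Subtype.val_injective h2
      obtain ⟨z, hz⟩ := (hex₀ (t1 - t2)).1 h3
      have h4 : wA (t1 - t2) = 0 := by rw [map_sub, h1, sub_self]
      rw [← hz, hwAa] at h4
      have h5 : z = 0 := Subtype.val_injective h4
      rw [h5, map_zero] at hz
      exact sub_eq_zero.1 hz.symm
    hmι := by
      intro x
      have h1 : π₀ (ι₀ x) = 0 := exact_comp_zero hex₀ x
      show (wA (ι₀ x), (LinearMap.ker (CC.d 0)).subtype (π₀ (ι₀ x))) = _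
      rw [hwAa, h1]
      rfl
    hm2 := fun t => rfl } with hX₀def
  have hB : XGorensteinProjective R 𝒳 ((closureCR h𝒳 X₀).T 0) :=
    (closureCR h𝒳 X₀).xgp
  have hT : (closureCR h𝒳 X₀).T 0 = B := by
    show (Schain h𝒳 X₀ 0).T = B
    have e1 : Schain h𝒳 X₀ 0
        = (Rchain h𝒳 X₀ (0:ℤ).toNat).castE (by omega) (by omega) := dif_pos le_rfl
    rw [e1, ExtSES.castE_T]
    show ((X₀.castE (show (0:ℤ) = ((0:ℕ):ℤ) by simp) (show (0:ℤ) = ((0:ℕ):ℤ) by simp))).T = B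
    rw [ExtSES.castE_T]
  rwa [hT] at hB

end XGPAux


namespace XGPAux

open Function LinearMap XCompleteResolution

variable {R : Type u} [Ring R] {𝒳 : ModuleCat.{u} R → Prop}

theorem apply_ofInjective_symm {M N : Type u} [AddCommGroup M] [AddCommGroup N]
    [Module R M] [Module R N] (f : M →ₗ[R] N) (hf : Function.Injective f)
    (w : LinearMap.range f) : f ((LinearEquiv.ofInjective f hf).symm w) = ↑w := by
  have h1 : (↑((LinearEquiv.ofInjective f hf) ((LinearEquiv.ofInjective f hf).symm w)) : N) = ↑w :=
    congrArg Subtype.val ((LinearEquiv.ofInjective f hf).apply_symm_apply w)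
  rwa [LinearEquiv.ofInjective_apply] at h1

theorem ofInjective_symm_eq {M N : Type u} [AddCommGroup M] [AddCommGroup N]
    [Module R M] [Module R N] (f : M →ₗ[R] N) (hf : Function.Injective f)
    (w : LinearMap.range f) (a : M) (ha : f a = ↑w) :
    (LinearEquiv.ofInjective f hf).symm w = a := by
  apply hf
  rw [apply_ofInjective_symm, ha]

theorem xgp_iso {K L : ModuleCat.{u} R} (hK : XGorensteinProjective R 𝒳 K)
    (e : (↑K : Type u) ≃ₗ[R] ↑L) : XGorensteinProjective R 𝒳 L := by
  obtain ⟨C, ⟨eK⟩⟩ := hK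
  exact ⟨C, ⟨e.symm.trans eK⟩⟩

/-- A split short exact sequence gives a product decomposition. -/
theorem ses_split_equiv {A X P : Type u} [AddCommGroup A] [AddCommGroup X] [AddCommGroup P]
    [Module R A] [Module R X] [Module R P]
    (ι : A →ₗ[R] X) (π : X →ₗ[R] P) (hι : Function.Injective ι) (hex : Function.Exact ι π)
    (s : P →ₗ[R] X) (hs : π ∘ₗ s = LinearMap.id) :
    Nonempty (X ≃ₗ[R] A × P) := by
  have hsap : ∀ p, π (s p) = p := LinearMap.congr_fun hs
  have hmem : ∀ x, ((LinearMap.id : X →ₗ[R] X) - s ∘ₗ π) x ∈ LinearMap.range ι := by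
    intro x
    apply (hex _).1
    show π (x - s (π x)) = 0
    rw [map_sub, hsap, sub_self]
  let eA := LinearEquiv.ofInjective ι hι
  let F : X →ₗ[R] A × P := LinearMap.prod
    (eA.symm.toLinearMap ∘ₗ LinearMap.codRestrict (LinearMap.range ι)
      ((LinearMap.id : X →ₗ[R] X) - s ∘ₗ π) hmem) π
  let G : (A × P) →ₗ[R] X := ι ∘ₗ LinearMap.fst R A P + s ∘ₗ LinearMap.snd R A P
  have hGF : ∀ x, G (F x) = x := by
    intro x
    show ι (eA.symm ⟨x - s (π x), hmem x⟩) + s (π x) = x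
    rw [apply_ofInjective_symm]
    show x - s (π x) + s (π x) = x
    abel
  have hFG : ∀ v : A × P, F (G v) = v := by
    rintro ⟨a, p⟩
    have hGv : G (a, p) = ι a + s p := rfl
    have hπG : π (G (a, p)) = p := by
      rw [hGv, map_add, exact_comp_zero hex, hsap, zero_add]
    have h1 : G (a, p) - s (π (G (a, p))) = ι a := by
      rw [hπG, hGv]
      abel
    apply Prod.ext
    · show eA.symm ⟨G (a,p) - s (π (G (a,p))), hmem _⟩ = a
      exact ofInjective_symm_eq ι hι _ a h1.symm
    · exact hπG
  exact ⟨LinearEquiv.ofLinear F G (LinearMap.ext hFG) (LinearMap.ext hGF)⟩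

/-- Schanuel's lemma. -/
theorem schanuel {K1 P K2 Q M : ModuleCat.{u} R}
    (i1 : ↑K1 →ₗ[R] ↑P) (p : ↑P →ₗ[R] ↑M) (i2 : ↑K2 →ₗ[R] ↑Q) (q : ↑Q →ₗ[R] ↑M)
    (hi1 : Function.Injective i1) (hp : Function.Surjective p) (hex1 : Function.Exact i1 p)
    (hi2 : Function.Injective i2) (hq : Function.Surjective q) (hex2 : Function.Exact i2 q)
    (hP : Module.Projective R P) (hQ : Module.Projective R Q) :
    Nonempty ((↑K1 × ↑Q : Type u) ≃ₗ[R] (↑K2 × ↑P : Type u)) := by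
  classical
  set φ : (↑P × ↑Q : Type u) →ₗ[R] ↑M :=
    p ∘ₗ LinearMap.fst R ↑P ↑Q - q ∘ₗ LinearMap.snd R ↑P ↑Q with hφ
  set X := LinearMap.ker φ with hX
  have hφap : ∀ v : ↑P × ↑Q, φ v = p v.1 - q v.2 := fun v => rfl
  -- first structure : 0 → K2 → X → P → 0
  have hmem2 : ∀ k : ↑K2, ((0 : ↑P), i2 k) ∈ X := by
    intro k
    show φ (0, i2 k) = 0
    rw [hφap]
    show p 0 - q (i2 k) = 0
    rw [map_zero, exact_comp_zero hex2, sub_zero]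
  let j2 : ↑K2 →ₗ[R] ↥X := LinearMap.codRestrict X
    (LinearMap.prod 0 i2) (fun k => hmem2 k)
  let π1 : ↥X →ₗ[R] ↑P := LinearMap.fst R ↑P ↑Q ∘ₗ X.subtype
  have hπ1s : Function.Surjective π1 := by
    intro x
    obtain ⟨y, hy⟩ := hq (p x)
    exact ⟨⟨(x, y), by show φ (x, y) = 0; rw [hφap]; show p x - q y = 0; rw [hy, sub_self]⟩, rfl⟩
  have hj2inj : Function.Injective j2 := by
    intro a b hab
    have := congrArg (fun z => ((X.subtype) z).2) hab
    exact hi2 this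
  have hex12 : Function.Exact j2 π1 := by
    rintro ⟨⟨x, y⟩, hv⟩
    constructor
    · intro h0
      have hx : x = 0 := h0
      have hqy : q y = 0 := by
        have h1 : φ (x, y) = 0 := hv
        rw [hφap] at h1
        have : p x - q y = 0 := h1
        rw [hx, map_zero, zero_sub, neg_eq_zero] at this
        exact this
      obtain ⟨k, hk⟩ := (hex2 y).1 hqy
      refine ⟨k, Subtype.ext ?_⟩
      show ((0 : ↑P), i2 k) = (x, y)
      rw [hx, hk]
    · rintro ⟨k, hk⟩
      rw [← hk]
      rfl
  -- splitting
  haveI := hP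
  obtain ⟨s1, hs1⟩ := Module.projective_lifting_property π1 LinearMap.id hπ1s
  obtain ⟨e1⟩ := ses_split_equiv j2 π1 hj2inj hex12 s1 hs1
  -- second structure : 0 → K1 → X → Q → 0
  have hmem1 : ∀ k : ↑K1, ((i1 k : ↑P), (0 : ↑Q)) ∈ X := by
    intro k
    show φ (i1 k, 0) = 0
    rw [hφap]
    show p (i1 k) - q 0 = 0
    rw [map_zero, exact_comp_zero hex1, sub_zero]
  let j1 : ↑K1 →ₗ[R] ↥X := LinearMap.codRestrict X
    (LinearMap.prod i1 0) (fun k => hmem1 k)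
  let π2 : ↥X →ₗ[R] ↑Q := LinearMap.snd R ↑P ↑Q ∘ₗ X.subtype
  have hπ2s : Function.Surjective π2 := by
    intro y
    obtain ⟨x, hx⟩ := hp (q y)
    exact ⟨⟨(x, y), by show φ (x, y) = 0; rw [hφap]; show p x - q y = 0; rw [hx, sub_self]⟩, rfl⟩
  have hj1inj : Function.Injective j1 := by
    intro a b hab
    have := congrArg (fun z => ((X.subtype) z).1) hab
    exact hi1 this
  have hex21 : Function.Exact j1 π2 := by
    rintro ⟨⟨x, y⟩, hv⟩
    constructor
    · intro h0
      have hy : y = 0 := h0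
      have hpx : p x = 0 := by
        have h1 : φ (x, y) = 0 := hv
        rw [hφap] at h1
        have : p x - q y = 0 := h1
        rw [hy, map_zero, sub_zero] at this
        exact this
      obtain ⟨k, hk⟩ := (hex1 x).1 hpx
      refine ⟨k, Subtype.ext ?_⟩
      show ((i1 k : ↑P), (0:↑Q)) = (x, y)
      rw [hy, hk]
    · rintro ⟨k, hk⟩
      rw [← hk]
      rfl
  haveI := hQ
  obtain ⟨s2, hs2⟩ := Module.projective_lifting_property π2 LinearMap.id hπ2s
  obtain ⟨e2⟩ := ses_split_equiv j1 π2 hj1inj hex21 s2 hs2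
  exact ⟨e2.symm.trans e1⟩

end XGPAux


namespace XGPAux

open Function LinearMap XCompleteResolution

variable {R : Type u} [Ring R] {𝒳 : ModuleCat.{u} R → Prop}

theorem res_iso {𝒞 : ModuleCat.{u} R → Prop} :
    ∀ (j : ℕ) (K M M' : ModuleCat.{u} R), ResWithKernel R 𝒞 j K M →
      ((↑M : Type u) ≃ₗ[R] ↑M') → ResWithKernel R 𝒞 j K M' := by
  intro j K M M' h e
  cases j with
  | zero =>
    have h' : Nonempty ((↑K : Type u) ≃ₗ[R] ↑M) := h
    exact ⟨h'.some.trans e⟩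
  | succ j =>
    obtain ⟨G, L, f, g, hG, hf, hg, hex, hres⟩ := h
    refine ⟨G, L, f, e.toLinearMap ∘ₗ g, hG, hf, e.surjective.comp hg, ?_, hres⟩
    intro y
    rw [show (e.toLinearMap ∘ₗ g) y = e (g y) from rfl, LinearEquiv.map_eq_zero_iff]
    exact hex y

theorem res_mono {𝒞 𝒞' : ModuleCat.{u} R → Prop} (himp : ∀ N, 𝒞 N → 𝒞' N) :
    ∀ (j : ℕ) (K M : ModuleCat.{u} R), ResWithKernel R 𝒞 j K M → ResWithKernel R 𝒞' j K M := by
  intro j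
  induction j with
  | zero => intro K M h; exact h
  | succ j IH =>
    intro K M h
    obtain ⟨G, L, f, g, hG, hf, hg, hex, hres⟩ := h
    exact ⟨G, L, f, g, himp G hG, hf, hg, hex, IH K L hres⟩

theorem res_pad : ∀ (j : ℕ) (K L Q : ModuleCat.{u} R), Module.Projective R ↑K →
    Module.Projective R ↑Q →
    ResWithKernel R (fun N => Module.Projective R ↑N) j K L →
    ∃ K' : ModuleCat.{u} R, Module.Projective R ↑K' ∧
      ResWithKernel R (fun N => Module.Projective R ↑N) j K' (ModuleCat.of R (↑L × ↑Q)) := by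
  intro j K L Q hK hQ h
  cases j with
  | zero =>
    have h' : Nonempty ((↑K : Type u) ≃ₗ[R] ↑L) := h
    refine ⟨ModuleCat.of R (↑K × ↑Q), ?_, ?_⟩
    · haveI := hK; haveI := hQ
      exact (inferInstance : Module.Projective R (↑K × ↑Q))
    · exact ⟨LinearEquiv.prodCongr h'.some (LinearEquiv.refl R ↑Q)⟩
  | succ j =>
    obtain ⟨G, L₁, f, g, hG, hf, hg, hex, hres⟩ := h
    refine ⟨K, hK, ModuleCat.of R (↑G × ↑Q), L₁, LinearMap.inl R ↑G ↑Q ∘ₗ f,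
      LinearMap.prodMap g LinearMap.id, ?_, ?_, ?_, ?_, hres⟩
    · haveI := hG; haveI := hQ
      exact (inferInstance : Module.Projective R (↑G × ↑Q))
    · intro a b hab
      exact hf (congrArg Prod.fst hab)
    · exact Function.Surjective.prodMap hg Function.surjective_id
    · rintro ⟨x, y⟩
      constructor
      · intro h0
        have h1 : g x = 0 := congrArg Prod.fst h0
        have h2 : y = 0 := congrArg Prod.snd h0
        obtain ⟨l, hl⟩ := (hex x).1 h1
        exact ⟨l, show ((f l : ↑G), (0 : ↑Q)) = (x, y) from Prod.ext hl h2.symm⟩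
      · rintro ⟨l, hl⟩
        rw [← hl]
        show (g (f l), (0:↑Q)) = 0
        rw [exact_comp_zero hex]
        rfl

theorem res_strip : ∀ (j : ℕ) (N P K' : ModuleCat.{u} R), Module.Projective R ↑P →
    Module.Projective R ↑K' →
    ResWithKernel R (fun N' => Module.Projective R ↑N') j K' (ModuleCat.of R (↑N × ↑P)) →
    ∃ (j' : ℕ) (K'' : ModuleCat.{u} R), Module.Projective R ↑K'' ∧
      ResWithKernel R (fun N' => Module.Projective R ↑N') j' K'' N := by
  intro j N P K' hP hK' h
  cases j with
  | zero =>
    have h' : Nonempty ((↑K' : Type u) ≃ₗ[R] (↑N × ↑P)) := h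
    obtain ⟨e⟩ := h'
    have hsplit : (LinearMap.fst R ↑N ↑P ∘ₗ e.toLinearMap) ∘ₗ
        (e.symm.toLinearMap ∘ₗ LinearMap.inl R ↑N ↑P) = LinearMap.id := by
      ext x
      show ((e (e.symm (x, 0))) : ↑N × ↑P).1 = x
      rw [e.apply_symm_apply]
    haveI := hK'
    have hNproj : Module.Projective R ↑N :=
      Module.Projective.of_split (e.symm.toLinearMap ∘ₗ LinearMap.inl R ↑N ↑P)
        (LinearMap.fst R ↑N ↑P ∘ₗ e.toLinearMap) hsplit
    exact ⟨0, N, hNproj, ⟨LinearEquiv.refl R ↑N⟩⟩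
  | succ j =>
    obtain ⟨Q₀, Wmid, f, g, hQ₀, hf, hg, hex, hres⟩ := h
    set gN : ↑Q₀ →ₗ[R] ↑N := LinearMap.fst R ↑N ↑P ∘ₗ g with hgNdef
    have hgNs : Function.Surjective gN := by
      intro x
      obtain ⟨y, hy⟩ := hg (x, 0)
      exact ⟨y, by show (g y).1 = x; rw [hy]⟩
    set V := LinearMap.ker gN with hVdef
    have hmemW : ∀ w : ↑Wmid, f w ∈ V := by
      intro w
      show (g (f w)).1 = 0
      rw [exact_comp_zero hex]
      rfl
    set ιW : ↑Wmid →ₗ[R] ↥V := LinearMap.codRestrict V f hmemW with hιWdef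
    set πP : ↥V →ₗ[R] ↑P := LinearMap.snd R ↑N ↑P ∘ₗ g ∘ₗ V.subtype with hπPdef
    have hπPs : Function.Surjective πP := by
      intro p
      obtain ⟨y, hy⟩ := hg (0, p)
      have hyV : y ∈ V := by show (g y).1 = 0; rw [hy]
      exact ⟨⟨y, hyV⟩, by show (g y).2 = p; rw [hy]⟩
    have hιWinj : Function.Injective ιW := by
      intro a b hab
      exact hf (congrArg Subtype.val hab)
    have hexWP : Function.Exact ιW πP := by
      rintro ⟨x, hx⟩
      constructor
      · intro h0
        have hgx : g x = 0 := by
          have h1 : (g x).1 = 0 := hx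
          have h2 : (g x).2 = 0 := h0
          exact Prod.ext h1 h2
        obtain ⟨w, hw⟩ := (hex x).1 hgx
        exact ⟨w, Subtype.ext hw⟩
      · rintro ⟨w, hw⟩
        rw [← hw]
        show (g (f w)).2 = 0
        rw [exact_comp_zero hex]
        rfl
    haveI := hP
    obtain ⟨sP, hsP⟩ := Module.projective_lifting_property πP LinearMap.id hπPs
    obtain ⟨eV⟩ := ses_split_equiv ιW πP hιWinj hexWP sP hsP
    obtain ⟨K2, hK2, hresWP⟩ := res_pad j K' Wmid P hK' hP hres
    have hresV : ResWithKernel R (fun N' => Module.Projective R ↑N') j K2 (ModuleCat.of R ↥V) :=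
      res_iso j K2 (ModuleCat.of R (↑Wmid × ↑P)) (ModuleCat.of R ↥V) hresWP eV.symm
    refine ⟨j + 1, K2, hK2, Q₀, ModuleCat.of R ↥V, V.subtype, gN, hQ₀,
      Subtype.val_injective, hgNs, ?_, hresV⟩
    intro y
    constructor
    · intro h0
      exact ⟨⟨y, h0⟩, rfl⟩
    · rintro ⟨⟨w, hw⟩, rfl⟩
      exact hw

theorem ds_lemma {K Q M : ModuleCat.{u} R} (i : ↑K →ₗ[R] ↑Q) (q : ↑Q →ₗ[R] ↑M)
    (hi : Function.Injective i) (hq : Function.Surjective q) (hex : Function.Exact i q)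
    (hQ : Module.Projective R ↑Q)
    (hfin : ∃ (k : ℕ) (KM : ModuleCat.{u} R), Module.Projective R ↑KM ∧
      ResWithKernel R (fun N => Module.Projective R ↑N) k KM M) :
    ∃ (k' : ℕ) (K' : ModuleCat.{u} R), Module.Projective R ↑K' ∧
      ResWithKernel R (fun N => Module.Projective R ↑N) k' K' K := by
  obtain ⟨k, KM, hKM, hres⟩ := hfin
  cases k with
  | zero =>
    have h' : Nonempty ((↑KM : Type u) ≃ₗ[R] ↑M) := hres
    haveI := hKM
    haveI : Module.Projective R ↑M := Module.Projective.of_equiv h'.some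
    obtain ⟨s, hs⟩ := Module.projective_lifting_property q LinearMap.id hq
    have hsap : ∀ x, q (s x) = x := LinearMap.congr_fun hs
    have hmem : ∀ x, ((LinearMap.id : ↑Q →ₗ[R] ↑Q) - s ∘ₗ q) x ∈ LinearMap.range i := by
      intro x
      apply (hex _).1
      show q (x - s (q x)) = 0
      rw [map_sub, hsap, sub_self]
    set r : ↑Q →ₗ[R] ↑K := (LinearEquiv.ofInjective i hi).symm.toLinearMap ∘ₗ
      LinearMap.codRestrict (LinearMap.range i)
        ((LinearMap.id : ↑Q →ₗ[R] ↑Q) - s ∘ₗ q) hmem with hrdef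
    have hri : r ∘ₗ i = LinearMap.id := by
      ext a
      show (LinearEquiv.ofInjective i hi).symm ⟨i a - s (q (i a)), hmem _⟩ = a
      refine ofInjective_symm_eq i hi _ a ?_
      show i a = i a - s (q (i a))
      rw [exact_comp_zero hex, map_zero, sub_zero]
    haveI := hQ
    have hKproj : Module.Projective R ↑K := Module.Projective.of_split i r hri
    exact ⟨0, K, hKproj, ⟨LinearEquiv.refl R ↑K⟩⟩
  | succ k =>
    obtain ⟨P₀, M₁, f, g, hP₀, hf, hg, hexfg, hres₁⟩ := hres
    obtain ⟨esch⟩ := schanuel i q f g hi hq hex hf hg hexfg hQ hP₀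
    obtain ⟨K2, hK2, hresMQ⟩ := res_pad k KM M₁ Q hKM hQ hres₁
    have hresKP : ResWithKernel R (fun N => Module.Projective R ↑N) k K2
        (ModuleCat.of R (↑K × ↑P₀)) :=
      res_iso k K2 (ModuleCat.of R (↑M₁ × ↑Q)) (ModuleCat.of R (↑K × ↑P₀)) hresMQ esch.symm
    obtain ⟨j', K'', hK'', hres''⟩ := res_strip k K P₀ K2 hP₀ hK2 hresKP
    exact ⟨j', K'', hK'', hres''⟩

theorem kernel_pd_finite : ∀ (m : ℕ) (M K : ModuleCat.{u} R),
    ResWithKernel R (fun N => Module.Projective R ↑N) m K M →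
    (∃ (k : ℕ) (KM : ModuleCat.{u} R), Module.Projective R ↑KM ∧
      ResWithKernel R (fun N => Module.Projective R ↑N) k KM M) →
    ∃ (k' : ℕ) (K' : ModuleCat.{u} R), Module.Projective R ↑K' ∧
      ResWithKernel R (fun N => Module.Projective R ↑N) k' K' K := by
  intro m
  induction m with
  | zero =>
    intro M K h hfin
    have h' : Nonempty ((↑K : Type u) ≃ₗ[R] ↑M) := h
    obtain ⟨k, KM, h1, h2⟩ := hfin
    exact ⟨k, KM, h1, res_iso k KM M K h2 h'.some.symm⟩
  | succ m IH =>
    intro M K h hfin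
    obtain ⟨Q, E, f, g, hQ, hf, hg, hex, hres⟩ := h
    exact IH E K hres (ds_lemma f g hf hg hex hQ hfin)

end XGPAux


namespace XGPAux

open Function LinearMap XCompleteResolution

variable {R : Type u} [Ring R] {𝒳 : ModuleCat.{u} R → Prop}

theorem res_of_ext (h𝒳 : ∀ P : ModuleCat.{u} R, Module.Projective R P → 𝒳 P)
    (j : ℕ) (K L E A : ModuleCat.{u} R)
    (hA : XGorensteinProjective R 𝒳 A) (hK : XGorensteinProjective R 𝒳 K)
    (ι : ↑A →ₗ[R] ↑E) (π : ↑E →ₗ[R] ↑L)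
    (hι : Function.Injective ι) (hπ : Function.Surjective π) (hex : Function.Exact ι π)
    (hres : ResWithKernel R (XGorensteinProjective R 𝒳) j K L) :
    ∃ K', XGorensteinProjective R 𝒳 K' ∧
      ResWithKernel R (XGorensteinProjective R 𝒳) j K' E := by
  cases j with
  | zero =>
    have h' : Nonempty ((↑K : Type u) ≃ₗ[R] ↑L) := hres
    have hL : XGorensteinProjective R 𝒳 L := xgp_iso hK h'.some
    have hE : XGorensteinProjective R 𝒳 E := xgp_extension h𝒳 hA hL ι π hι hπ hex
    exact ⟨E, hE, ⟨LinearEquiv.refl R ↑E⟩⟩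
  | succ j =>
    obtain ⟨G₁, L₁, f, g, hG₁, hf, hg, hexfg, hres₁⟩ := hres
    set φT : (↑E × ↑G₁ : Type u) →ₗ[R] ↑L :=
      π ∘ₗ LinearMap.fst R ↑E ↑G₁ - g ∘ₗ LinearMap.snd R ↑E ↑G₁ with hφTdef
    have hφTap : ∀ v : ↑E × ↑G₁, φT v = π v.1 - g v.2 := fun v => rfl
    set T := LinearMap.ker φT with hTdef
    set TM := ModuleCat.of R ↥T with hTMdef
    set pr1T : ↑TM →ₗ[R] ↑E := LinearMap.fst R ↑E ↑G₁ ∘ₗ T.subtype with hpr1def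
    have hpr1s : Function.Surjective pr1T := by
      intro x
      obtain ⟨y, hy⟩ := hg (π x)
      exact ⟨⟨(x, y), by show φT (x,y) = 0; rw [hφTap]; show π x - g y = 0; rw [hy, sub_self]⟩, rfl⟩
    have hmemL₁ : ∀ l : ↑L₁, (LinearMap.prod (0 : ↑L₁ →ₗ[R] ↑E) f) l ∈ T := by
      intro l
      show φT (0, f l) = 0
      rw [hφTap]
      show π 0 - g (f l) = 0
      rw [map_zero, exact_comp_zero hexfg, sub_zero]
    set ιL₁ : ↑L₁ →ₗ[R] ↑TM := LinearMap.codRestrict T _ hmemL₁ with hιL₁def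
    have hιL₁inj : Function.Injective ιL₁ := by
      intro a b hab
      have := congrArg (fun z => ((T.subtype) z).2) hab
      exact hf this
    have hexL₁ : Function.Exact ιL₁ pr1T := by
      rintro ⟨⟨x, y⟩, hv⟩
      constructor
      · intro h0
        have hx : x = 0 := h0
        have hgy : g y = 0 := by
          have h1 : φT (x, y) = 0 := hv
          rw [hφTap] at h1
          have h2 : π x - g y = 0 := h1
          rw [hx, map_zero, zero_sub, neg_eq_zero] at h2
          exact h2
        obtain ⟨l, hl⟩ := (hexfg y).1 hgy
        refine ⟨l, Subtype.ext ?_⟩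
        show ((0 : ↑E), f l) = (x, y)
        rw [hx, hl]
      · rintro ⟨l, hl⟩
        rw [← hl]
        rfl
    have hmemA : ∀ a : ↑A, (LinearMap.prod ι (0 : ↑A →ₗ[R] ↑G₁)) a ∈ T := by
      intro a
      show φT (ι a, 0) = 0
      rw [hφTap]
      show π (ι a) - g 0 = 0
      rw [map_zero, exact_comp_zero hex, sub_zero]
    set ιA : ↑A →ₗ[R] ↑TM := LinearMap.codRestrict T _ hmemA with hιAdef
    have hιAinj : Function.Injective ιA := by
      intro a b hab
      have := congrArg (fun z => ((T.subtype) z).1) hab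
      exact hι this
    set pr2T : ↑TM →ₗ[R] ↑G₁ := LinearMap.snd R ↑E ↑G₁ ∘ₗ T.subtype with hpr2def
    have hpr2s : Function.Surjective pr2T := by
      intro y
      obtain ⟨x, hx⟩ := hπ (g y)
      exact ⟨⟨(x, y), by show φT (x,y) = 0; rw [hφTap]; show π x - g y = 0; rw [hx, sub_self]⟩, rfl⟩
    have hexA : Function.Exact ιA pr2T := by
      rintro ⟨⟨x, y⟩, hv⟩
      constructor
      · intro h0
        have hy : y = 0 := h0
        have hπx : π x = 0 := by
          have h1 : φT (x, y) = 0 := hv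
          rw [hφTap] at h1
          have h2 : π x - g y = 0 := h1
          rw [hy, map_zero, sub_zero] at h2
          exact h2
        obtain ⟨a, ha⟩ := (hex x).1 hπx
        refine ⟨a, Subtype.ext ?_⟩
        show ((ι a : ↑E), (0 : ↑G₁)) = (x, y)
        rw [hy, ha]
      · rintro ⟨a, ha⟩
        rw [← ha]
        rfl
    have hTM : XGorensteinProjective R 𝒳 TM :=
      xgp_extension h𝒳 hA hG₁ ιA pr2T hιAinj hpr2s hexA
    exact ⟨K, hK, TM, L₁, ιL₁, pr1T, hTM, hιL₁inj, hpr1s, hexL₁, hres₁⟩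

theorem strict_res (h𝒳 : ∀ P : ModuleCat.{u} R, Module.Projective R P → 𝒳 P) :
    ∀ (m : ℕ) (M K : ModuleCat.{u} R), XGorensteinProjective R 𝒳 K →
    ResWithKernel R (XGorensteinProjective R 𝒳) m K M →
    ∃ K', XGorensteinProjective R 𝒳 K' ∧
      ResWithKernel R (fun N => Module.Projective R N) m K' M := by
  intro m
  induction m with
  | zero => intro M K hK h; exact ⟨K, hK, h⟩
  | succ m IH =>
    intro M K hK h
    obtain ⟨G₀, L, f, g, hG₀, hf, hg, hex, hres⟩ := h
    obtain ⟨CG, ⟨e₀⟩⟩ := hG₀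
    set p : ↑(CG.P (-1)) →ₗ[R] ↑G₀ := e₀.symm.toLinearMap ∘ₗ CG.sur (-1) with hpdef
    have hps : Function.Surjective p := e₀.symm.surjective.comp (CG.sur_surj (-1))
    have hkerp : ∀ x, p x = 0 ↔ x ∈ LinearMap.ker (CG.d (-1)) := by
      intro x
      show e₀.symm (CG.sur (-1) x) = 0 ↔ _
      rw [LinearEquiv.map_eq_zero_iff]
      constructor
      · intro hx
        rw [← CG.ker_sur (-1)]
        exact hx
      · intro hx
        have : x ∈ LinearMap.ker (CG.sur (-1)) := by rw [CG.ker_sur]; exact hx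
        exact this
    set gp : ↑(CG.P (-1)) →ₗ[R] ↑M := g ∘ₗ p with hgpdef
    have hgps : Function.Surjective gp := hg.comp hps
    set E := ModuleCat.of R (LinearMap.ker gp) with hEdef
    set A := ModuleCat.of R (LinearMap.ker (CG.d (-1))) with hAdef
    have hA : XGorensteinProjective R 𝒳 A := xgp_ker CG (-1)
    have hmemA : ∀ x : (LinearMap.ker (CG.d (-1)) : Type u),
        (LinearMap.ker (CG.d (-1))).subtype x ∈ LinearMap.ker gp := by
      intro x
      have h1 : p ((LinearMap.ker (CG.d (-1))).subtype x) = 0 := (hkerp _).2 x.2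
      show g (p _) = 0
      rw [h1, map_zero]
    set ιA : ↑A →ₗ[R] ↑E := LinearMap.codRestrict (LinearMap.ker gp) _ hmemA with hιAdef
    have hιAinj : Function.Injective ιA := by
      intro a b hab
      have h1 := congrArg (fun z => ((LinearMap.ker gp).subtype z : ↑(CG.P (-1)))) hab
      exact Subtype.val_injective h1
    have hmemL : ∀ v : (LinearMap.ker gp : Type u),
        (p ∘ₗ (LinearMap.ker gp).subtype) v ∈ LinearMap.range f := by
      intro v
      apply (hex _).1
      exact v.2
    set πL : ↑E →ₗ[R] ↑L := (LinearEquiv.ofInjective f hf).symm.toLinearMap ∘ₗ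
      LinearMap.codRestrict (LinearMap.range f) _ hmemL with hπLdef
    have hπLs : Function.Surjective πL := by
      intro l
      obtain ⟨y, hy⟩ := hps (f l)
      have hyE : y ∈ LinearMap.ker gp := by
        show g (p y) = 0
        rw [hy, exact_comp_zero hex]
      refine ⟨⟨y, hyE⟩, ?_⟩
      exact ofInjective_symm_eq f hf _ l (by show f l = p y; rw [hy])
    have hexE : Function.Exact ιA πL := by
      rintro ⟨v, hv⟩
      constructor
      · intro h0
        have h1 : (⟨p v, hmemL ⟨v, hv⟩⟩ : LinearMap.range f) = 0 := by
          have h0' : (LinearEquiv.ofInjective f hf).symm ⟨p v, hmemL ⟨v, hv⟩⟩ = 0 := h0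
          exact (LinearEquiv.map_eq_zero_iff _).1 h0' 
        have h2 : p v = 0 := congrArg Subtype.val h1
        have h3 : v ∈ LinearMap.ker (CG.d (-1)) := (hkerp v).1 h2
        exact ⟨⟨v, h3⟩, Subtype.ext rfl⟩
      · rintro ⟨a, ha⟩
        rw [← ha]
        have h1 : p ((LinearMap.ker (CG.d (-1))).subtype a) = 0 := (hkerp _).2 a.2
        show (LinearEquiv.ofInjective f hf).symm ⟨p _, _⟩ = 0
        refine ofInjective_symm_eq f hf _ 0 ?_
        show f 0 = p ((LinearMap.ker (CG.d (-1))).subtype a)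
        rw [map_zero, h1]
    obtain ⟨K', hK', hresE⟩ := res_of_ext h𝒳 m K L E A hA hK ιA πL hιAinj hπLs hexE hres
    obtain ⟨K'', hK'', hresP⟩ := IH E K' hK' hresE
    refine ⟨K'', hK'', CG.P (-1), E, (LinearMap.ker gp).subtype, gp, CG.projective (-1),
      Subtype.val_injective, hgps, ?_, hresP⟩
    intro y
    constructor
    · intro h0
      exact ⟨⟨y, h0⟩, rfl⟩
    · rintro ⟨⟨w, hw⟩, rfl⟩
      exact hw

theorem xgp_pd_proj (h𝒳 : ∀ P : ModuleCat.{u} R, Module.Projective R P → 𝒳 P)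
    (M : ModuleCat.{u} R) (hM : XGorensteinProjective R 𝒳 M) (k : ℕ) (K : ModuleCat.{u} R)
    (hK : Module.Projective R K)
    (hres : ResWithKernel R (fun N => Module.Projective R N) k K M) :
    Module.Projective R M := by
  cases k with
  | zero =>
    have h' : Nonempty ((↑K : Type u) ≃ₗ[R] ↑M) := hres
    haveI := hK
    exact Module.Projective.of_equiv h'.some
  | succ k =>
    obtain ⟨Q, L, f, g, hQ, hf, hg, hex, hres'⟩ := hres
    obtain ⟨C, ⟨e⟩⟩ := hM
    have hEphiL : ∀ n, Ephi L C n := ephi_of_res h𝒳 k L K hK hres' C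
    set π : ↑Q →ₗ[R] (LinearMap.ker (C.d 0) : Type u) := e.toLinearMap ∘ₗ g with hπdef
    have hπs : Function.Surjective π := e.surjective.comp hg
    have hexfπ : Function.Exact f π := by
      intro y
      rw [show π y = e (g y) from rfl, LinearEquiv.map_eq_zero_iff]
      exact hex y
    obtain ⟨s, hs⟩ := split_of_ephi C 0 L Q hEphiL f π hf hπs hexfπ
    have h1 : (e.symm.toLinearMap ∘ₗ π) ∘ₗ (s ∘ₗ e.toLinearMap) = LinearMap.id := by
      ext x
      show e.symm (π (s (e x))) = x
      have h2 : π (s (e x)) = e x := LinearMap.congr_fun hs (e x)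
      rw [h2, e.symm_apply_apply]
    haveI := hQ
    exact Module.Projective.of_split (s ∘ₗ e.toLinearMap) (e.symm.toLinearMap ∘ₗ π) h1

theorem relDim_le_of_res {𝒞 : ModuleCat.{u} R → Prop} {M K : ModuleCat.{u} R} {m : ℕ}
    (hK : 𝒞 K) (h : ResWithKernel R 𝒞 m K M) : relDim R 𝒞 M ≤ (m : ℕ∞) :=
  sInf_le ⟨m, rfl, K, hK, h⟩

theorem relDim_ne_top {𝒞 : ModuleCat.{u} R → Prop} {M : ModuleCat.{u} R}
    (h : relDim R 𝒞 M ≠ ⊤) :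
    ∃ (m : ℕ) (K : ModuleCat.{u} R), 𝒞 K ∧ ResWithKernel R 𝒞 m K M := by
  by_contra hc
  apply h
  have hempty : {n : ℕ∞ | ∃ m : ℕ, n = m ∧ ∃ K, 𝒞 K ∧ ResWithKernel R 𝒞 m K M} = ∅ := by
    ext x
    simp only [Set.mem_setOf_eq, Set.mem_empty_iff_false, iff_false]
    rintro ⟨m, rfl, K, hK, hres⟩
    exact hc ⟨m, K, hK, hres⟩
  rw [relDim, hempty, sInf_empty]

theorem pd_le_of_xgp_res (h𝒳 : ∀ P : ModuleCat.{u} R, Module.Projective R P → 𝒳 P)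
    (m : ℕ) (M K : ModuleCat.{u} R) (hK : XGorensteinProjective R 𝒳 K)
    (hres : ResWithKernel R (XGorensteinProjective R 𝒳) m K M)
    (hfin : pdim R M ≠ ⊤) : pdim R M ≤ (m : ℕ∞) := by
  obtain ⟨K', hK', hresP⟩ := strict_res h𝒳 m M K hK hres
  have hfin' := relDim_ne_top hfin
  obtain ⟨k', K'', hK'', hresK'⟩ := kernel_pd_finite m M K' hresP hfin'
  have hprojK' : Module.Projective R K' := xgp_pd_proj h𝒳 K' hK' k' K'' hK'' hresK'
  exact relDim_le_of_res hprojK' hresP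

theorem xgpd_le_pdim (h𝒳 : ∀ P : ModuleCat.{u} R, Module.Projective R P → 𝒳 P)
    (M : ModuleCat.{u} R) : xGpd R 𝒳 M ≤ pdim R M := by
  unfold xGpd pdim relDim
  apply sInf_le_sInf
  rintro x ⟨m, rfl, K, hK, hres⟩
  exact ⟨m, rfl, K, xgp_of_projective K hK,
    res_mono (fun N hN => xgp_of_projective N hN) m K M hres⟩

theorem pdim_le_xgpd (h𝒳 : ∀ P : ModuleCat.{u} R, Module.Projective R P → 𝒳 P)
    (M : ModuleCat.{u} R) (hM : pdim R M ≠ ⊤) : pdim R M ≤ xGpd R 𝒳 M := by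
  unfold xGpd relDim
  apply le_sInf
  rintro x ⟨m, rfl, K, hK, hres⟩
  exact pd_le_of_xgp_res h𝒳 m M K hK hres hM

end XGPAux


/-- If `M` has finite projective dimension then `Gpd(M) = 𝒳-Gpd(M) = pd(M)`.
In particular, an `𝒳`-Gorenstein projective module of finite projective
dimension is projective. -/
theorem xGpd_eq_pdim_of_finite_pdim
    (R : Type u) [Ring R] (𝒳 : ModuleCat.{u} R → Prop)
    (h𝒳 : ∀ P : ModuleCat.{u} R, Module.Projective R P → 𝒳 P) :
    (∀ M : ModuleCat.{u} R, pdim R M ≠ ⊤ →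
      gpd R M = xGpd R 𝒳 M ∧ xGpd R 𝒳 M = pdim R M) ∧
    (∀ M : ModuleCat.{u} R, XGorensteinProjective R 𝒳 M → pdim R M ≠ ⊤ →
      Module.Projective R M) := by
  constructor
  · intro M hM
    have h1 : xGpd R 𝒳 M = pdim R M :=
      le_antisymm (XGPAux.xgpd_le_pdim h𝒳 M) (XGPAux.pdim_le_xgpd h𝒳 M hM)
    have h2 : gpd R M = pdim R M :=
      le_antisymm (XGPAux.xgpd_le_pdim (fun _ hP => hP) M)
        (XGPAux.pdim_le_xgpd (fun _ hP => hP) M hM)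
    exact ⟨by rw [h1, h2], h1⟩
  · intro M hMxgp hfin
    obtain ⟨k, K, hK, hres⟩ := XGPAux.relDim_ne_top hfin
    exact XGPAux.xgp_pd_proj h𝒳 M hMxgp k K hK hres
end

section
/- Let n be a nonnegative integer. If X-Gpd(R/I) ≤ n for every left ideal I of R, then every module X in the class X has injective dimension at most n. -/
open CategoryTheory DirectSum

universe u

/-- `M` has injective dimension at most `n`. -/
def HasInjDimLE (R : Type u) [Ring R] : ℕ → ModuleCat.{u} R → Prop
  | 0, M => Module.Injective R M
  | n + 1, M => ∃ (I C : ModuleCat.{u} R) (f : M →ₗ[R] I) (g : I →ₗ[R] C),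
      Module.Injective R I ∧ Function.Injective f ∧ Function.Surjective g ∧
      Function.Exact f g ∧ HasInjDimLE R n C

/-- The injective dimension of `M`. -/
noncomputable def injDim (R : Type u) [Ring R] (M : ModuleCat.{u} R) : ℕ∞ :=
  sInf {n : ℕ∞ | ∃ m : ℕ, n = m ∧ HasInjDimLE R m M}


namespace XGpdProof
variable {R : Type u} [Ring R]

/-- Elementary statement of `Ext¹(G, W) = 0`. -/
def ExtZero (R : Type u) [Ring R] (W : Type u) [AddCommGroup W] [Module R W]
    (G : Type u) [AddCommGroup G] [Module R G] : Prop :=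
  ∀ (B : Type u) [AddCommGroup B] [Module R B] (g : B →ₗ[R] G),
    Function.Surjective g → ∀ φ : LinearMap.ker g →ₗ[R] W,
      ∃ ψ : B →ₗ[R] W, ∀ (x : B) (hx : x ∈ LinearMap.ker g), ψ x = φ ⟨x, hx⟩

variable {V B W W' G G' : Type u}
  [AddCommGroup V] [Module R V] [AddCommGroup B] [Module R B]
  [AddCommGroup W] [Module R W] [AddCommGroup W'] [Module R W']
  [AddCommGroup G] [Module R G] [AddCommGroup G'] [Module R G']

theorem descend (s : V →ₗ[R] B) (hs : Function.Surjective s) (Φ : V →ₗ[R] W)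
    (h : LinearMap.ker s ≤ LinearMap.ker Φ) :
    ∃ ψ : B →ₗ[R] W, ∀ v, ψ (s v) = Φ v := by
  refine ⟨(LinearMap.ker s).liftQ Φ h ∘ₗ
    ((LinearMap.quotKerEquivOfSurjective s hs).symm :
      B →ₗ[R] V ⧸ LinearMap.ker s), fun v => ?_⟩
  have h1 : (LinearMap.quotKerEquivOfSurjective s hs)
      (Submodule.Quotient.mk v) = s v := by
    simp [LinearMap.quotKerEquivOfSurjective, LinearMap.quotKerEquivRange]
  have h2 : (LinearMap.quotKerEquivOfSurjective s hs).symm (s v)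
      = Submodule.Quotient.mk v := by
    rw [← h1, LinearEquiv.symm_apply_apply]
  simp only [LinearMap.comp_apply, LinearEquiv.coe_coe, h2]
  exact Submodule.liftQ_apply _ _ _

theorem extZero_congr_right (hG : ExtZero R W G) (e : G ≃ₗ[R] G') :
    ExtZero R W G' := by
  intro B _ _ g' hg' φ'
  set g : B →ₗ[R] G := (e.symm : G' →ₗ[R] G) ∘ₗ g' with hgdef
  have hg : Function.Surjective g := e.symm.surjective.comp hg'
  have hker : LinearMap.ker g = LinearMap.ker g' := by
    ext x
    simp [hgdef, LinearMap.mem_ker, map_eq_zero_iff _ e.symm.injective]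
  obtain ⟨ψ, hψ⟩ := hG B g hg (φ' ∘ₗ Submodule.inclusion (le_of_eq hker))
  refine ⟨ψ, fun x hx => ?_⟩
  have hx' : x ∈ LinearMap.ker g := hker ▸ hx
  rw [hψ x hx']
  rfl

theorem extZero_congr_left (hG : ExtZero R W G) (e : W ≃ₗ[R] W') :
    ExtZero R W' G := by
  intro B _ _ g hg φ
  obtain ⟨ψ, hψ⟩ := hG B g hg ((e.symm : W' →ₗ[R] W) ∘ₗ φ)
  refine ⟨(e : W →ₗ[R] W') ∘ₗ ψ, fun x hx => ?_⟩
  simp [hψ x hx]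

theorem extZero_of_projective (hG : Module.Projective R G) : ExtZero R W G := by
  intro B _ _ g hg φ
  haveI := hG
  obtain ⟨σ, hσ⟩ := Module.projective_lifting_property g LinearMap.id hg
  have hmem : ∀ b : B, b - σ (g b) ∈ LinearMap.ker g := by
    intro b
    have : g (σ (g b)) = g b := LinearMap.congr_fun hσ (g b)
    simp [LinearMap.mem_ker, map_sub, this]
  refine ⟨φ ∘ₗ LinearMap.codRestrict (LinearMap.ker g)
    (LinearMap.id - σ ∘ₗ g) hmem, fun x hx => ?_⟩
  have : σ (g x) = 0 := by rw [LinearMap.mem_ker.mp hx, map_zero]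
  simp only [LinearMap.comp_apply, LinearMap.codRestrict_apply]
  congr 1
  ext
  simp [this]



section Core
variable {P B G W : Type u}
  [AddCommGroup P] [Module R P] [AddCommGroup B] [Module R B]
  [AddCommGroup G] [Module R G] [AddCommGroup W] [Module R W]

set_option maxHeartbeats 800000 in
/-- If an extension problem along `B ↠ G` can be solved after comparing with another
surjection `π : P ↠ G`, then it can be solved. -/
theorem core (π : P →ₗ[R] G) (hπ : Function.Surjective π) (g : B →ₗ[R] G)
    (α : P →ₗ[R] B) (hα : g ∘ₗ α = π) (φ : LinearMap.ker g →ₗ[R] W) (θ : P →ₗ[R] W)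
    (hθ : ∀ x ∈ LinearMap.ker π, ∀ (hx' : α x ∈ LinearMap.ker g), θ x = φ ⟨α x, hx'⟩) :
    ∃ ψ : B →ₗ[R] W, ∀ (x : B) (hx : x ∈ LinearMap.ker g), ψ x = φ ⟨x, hx⟩ := by
  have hga : ∀ x : P, g (α x) = π x := fun x => LinearMap.congr_fun hα x
  set s : (P × LinearMap.ker g) →ₗ[R] B :=
    α ∘ₗ LinearMap.fst R P (LinearMap.ker g)
      + (LinearMap.ker g).subtype ∘ₗ LinearMap.snd R P (LinearMap.ker g) with hs_def
  have hs_apply : ∀ v : P × LinearMap.ker g, s v = α v.1 + (v.2 : B) := fun v => rfl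
  have hs : Function.Surjective s := by
    intro b
    obtain ⟨x, hx⟩ := hπ (g b)
    have hmem : b - α x ∈ LinearMap.ker g := by
      simp [LinearMap.mem_ker, map_sub, hga, hx]
    exact ⟨(x, ⟨b - α x, hmem⟩), by simp [hs_apply]⟩
  set Φ : (P × LinearMap.ker g) →ₗ[R] W :=
    θ ∘ₗ LinearMap.fst R P (LinearMap.ker g) + φ ∘ₗ LinearMap.snd R P (LinearMap.ker g)
      with hΦ_def
  have hΦ_apply : ∀ v : P × LinearMap.ker g, Φ v = θ v.1 + φ v.2 := fun v => rfl
  have hker : LinearMap.ker s ≤ LinearMap.ker Φ := by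
    rintro ⟨x, a⟩ hv
    have hva : α x + (a : B) = 0 := hv
    have hag : α x ∈ LinearMap.ker g := by
      have : (a : B) ∈ LinearMap.ker g := a.2
      have h0 : g (α x) = - g (a : B) := by
        have := congrArg g hva
        simpa [map_add, eq_neg_iff_add_eq_zero] using this
      simp [LinearMap.mem_ker] at this ⊢
      simp [h0, this]
    have hπ0 : x ∈ LinearMap.ker π := by
      simpa [LinearMap.mem_ker, ← hga x] using LinearMap.mem_ker.mp hag
    have : Φ (x, a) = φ ⟨α x, hag⟩ + φ a := by rw [hΦ_apply, hθ x hπ0 hag]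
    rw [LinearMap.mem_ker, this, ← map_add]
    have : (⟨α x, hag⟩ + a : LinearMap.ker g) = 0 := by
      ext; simpa using hva
    rw [this, map_zero]
  obtain ⟨ψ, hψ⟩ := descend s hs Φ hker
  refine ⟨ψ, fun x hx => ?_⟩
  have h0 : s (0, ⟨x, hx⟩) = x := by simp [hs_apply]
  have h2 := hψ (0, ⟨x, hx⟩)
  rw [h0] at h2
  rw [h2, hΦ_apply]
  simp
end Core

section Elift
variable {V E W' K : Type u}
  [AddCommGroup V] [Module R V] [AddCommGroup E] [Module R E]
  [AddCommGroup W'] [Module R W'] [AddCommGroup K] [Module R K]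

set_option maxHeartbeats 800000 in
/-- If `Ext¹(K, V) = 0` and `0 → V → E → W' → 0` is exact, then any map `K → W'`
lifts to `K → E`. -/
theorem elift (f : V →ₗ[R] E) (hf : Function.Injective f) (p : E →ₗ[R] W')
    (hp : Function.Surjective p) (hfp : Function.Exact f p)
    (hK : ExtZero R V K) (μ : K →ₗ[R] W') :
    ∃ lam : K →ₗ[R] E, ∀ k, p (lam k) = μ k := by
  have hkerp : LinearMap.ker p = LinearMap.range f := LinearMap.exact_iff.mp hfp
  set D : Submodule R (E × K) :=
    LinearMap.ker (p ∘ₗ LinearMap.fst R E K - μ ∘ₗ LinearMap.snd R E K) with hD_def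
  have hD_mem : ∀ v : E × K, v ∈ D ↔ p v.1 = μ v.2 := by
    intro v
    simp [hD_def, LinearMap.mem_ker, sub_eq_zero]
  set snd' : D →ₗ[R] K := LinearMap.snd R E K ∘ₗ D.subtype with hsnd'_def
  have hsnd'_apply : ∀ v : D, snd' v = (v : E × K).2 := fun v => rfl
  have hsnd' : Function.Surjective snd' := by
    intro k
    obtain ⟨e, he⟩ := hp (μ k)
    exact ⟨⟨(e, k), (hD_mem _).mpr he⟩, rfl⟩
  -- the kernel of snd' maps into range f
  have hker_mem : ∀ v : LinearMap.ker snd', ((v : D) : E × K).1 ∈ LinearMap.range f := by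
    intro v
    rw [← hkerp, LinearMap.mem_ker]
    have h2 : ((v : D) : E × K).2 = 0 := v.2
    have := (hD_mem ((v : D) : E × K)).mp (v : D).2
    rw [this, h2, map_zero]
  set χ : LinearMap.ker snd' →ₗ[R] E :=
    LinearMap.fst R E K ∘ₗ D.subtype ∘ₗ (LinearMap.ker snd').subtype with hχ_def
  have hχ_apply : ∀ v : LinearMap.ker snd', χ v = ((v : D) : E × K).1 := fun v => rfl
  set e' : V ≃ₗ[R] LinearMap.range f := LinearEquiv.ofInjective f hf with he'_def
  have he'_apply : ∀ v : V, ((e' v : E)) = f v := fun v => rfl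
  set φ₀ : LinearMap.ker snd' →ₗ[R] V :=
    (e'.symm : LinearMap.range f →ₗ[R] V) ∘ₗ
      LinearMap.codRestrict (LinearMap.range f) χ (fun v => by
        simpa [hχ_apply] using hker_mem v) with hφ₀_def
  have hfφ₀ : ∀ v : LinearMap.ker snd', f (φ₀ v) = ((v : D) : E × K).1 := by
    intro v
    have : f (φ₀ v) = ((e' (φ₀ v) : E)) := (he'_apply _).symm
    rw [this, hφ₀_def]
    simp only [LinearMap.comp_apply, LinearEquiv.coe_coe, LinearEquiv.apply_symm_apply]
    rfl
  obtain ⟨Ψ, hΨ⟩ := hK D snd' hsnd' φ₀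
  set ι : V →ₗ[R] D :=
    LinearMap.codRestrict D (LinearMap.prod f 0) (fun v => by
      rw [hD_mem]
      simpa using hfp.apply_apply_eq_zero v) with hι_def
  have hι_apply : ∀ v : V, ((ι v : E × K)) = (f v, 0) := fun v => rfl
  set ρ : D →ₗ[R] D := LinearMap.id - ι ∘ₗ Ψ with hρ_def
  have hker_ρ : LinearMap.ker snd' ≤ LinearMap.ker ρ := by
    intro v hv
    have h1 : Ψ v = φ₀ ⟨v, hv⟩ := hΨ v hv
    rw [LinearMap.mem_ker, hρ_def]
    simp only [LinearMap.sub_apply, LinearMap.id_apply, LinearMap.comp_apply, h1]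
    rw [sub_eq_zero]
    apply Subtype.ext
    apply Prod.ext
    · rw [hι_apply]
      exact (hfφ₀ ⟨v, hv⟩).symm
    · rw [hι_apply]
      exact LinearMap.mem_ker.mp hv
  obtain ⟨τ, hτ⟩ := descend snd' hsnd' ρ hker_ρ
  have hsnd'ι : ∀ v : V, snd' (ι v) = 0 := by
    intro v
    rw [hsnd'_apply, hι_apply]
  have hsnd'τ : ∀ k, snd' (τ k) = k := by
    intro k
    obtain ⟨v, rfl⟩ := hsnd' k
    rw [hτ, hρ_def]
    simp only [LinearMap.sub_apply, LinearMap.id_apply, LinearMap.comp_apply, map_sub]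
    rw [hsnd'ι, sub_zero]
  refine ⟨LinearMap.fst R E K ∘ₗ D.subtype ∘ₗ τ, fun k => ?_⟩
  have hmem := (hD_mem ((τ k : D) : E × K)).mp (τ k).2
  show p ((τ k : E × K)).1 = μ k
  rw [hmem]
  exact congrArg μ (hsnd'τ k)
end Elift

section Grand
variable {M G₀ V E W' : Type u}
  [AddCommGroup M] [Module R M] [AddCommGroup G₀] [Module R G₀]
  [AddCommGroup V] [Module R V] [AddCommGroup E] [Module R E]
  [AddCommGroup W'] [Module R W']

set_option maxHeartbeats 1600000 in
/-- The key dimension-shifting step: if `0 → ker q → G₀ → M → 0` with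
`Ext¹(G₀, W') = 0`, `0 → V → E → W' → 0` with `E` injective, and
`Ext¹(ker q, V) = 0`, then `Ext¹(M, W') = 0`. -/
theorem grand (q : G₀ →ₗ[R] M) (hq : Function.Surjective q)
    (hG : ExtZero R W' G₀)
    (f : V →ₗ[R] E) (hf : Function.Injective f) (p : E →ₗ[R] W')
    (hp : Function.Surjective p) (hfp : Function.Exact f p)
    (hE : Module.Injective R E)
    (hker : ExtZero R V (LinearMap.ker q)) : ExtZero R W' M := by
  intro B _ _ g hg φ
  set B' : Submodule R (B × G₀) :=
    LinearMap.ker (g ∘ₗ LinearMap.fst R B G₀ - q ∘ₗ LinearMap.snd R B G₀) with hB'_def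
  have hB'_mem : ∀ v : B × G₀, v ∈ B' ↔ g v.1 = q v.2 := by
    intro v; simp [hB'_def, LinearMap.mem_ker, sub_eq_zero]
  set πB : B' →ₗ[R] B := LinearMap.fst R B G₀ ∘ₗ B'.subtype with hπB_def
  set πG : B' →ₗ[R] G₀ := LinearMap.snd R B G₀ ∘ₗ B'.subtype with hπG_def
  have hπB_apply : ∀ v : B', πB v = ((v : B × G₀)).1 := fun v => rfl
  have hπG_apply : ∀ v : B', πG v = ((v : B × G₀)).2 := fun v => rfl
  have hπB : Function.Surjective πB := by
    intro b
    obtain ⟨x, hx⟩ := hq (g b)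
    exact ⟨⟨(b, x), (hB'_mem _).mpr hx.symm⟩, rfl⟩
  have hπG : Function.Surjective πG := by
    intro x
    obtain ⟨b, hb⟩ := hg (q x)
    exact ⟨⟨(b, x), (hB'_mem _).mpr hb⟩, rfl⟩
  -- the map ker πG → ker g
  have hkerG_mem : ∀ v : LinearMap.ker πG, πB (v : B') ∈ LinearMap.ker g := by
    intro v
    have h2 : ((v : B') : B × G₀).2 = 0 := LinearMap.mem_ker.mp v.2
    have := (hB'_mem ((v : B') : B × G₀)).mp (v : B').2
    rw [LinearMap.mem_ker, hπB_apply, this, h2, map_zero]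
  set φ' : LinearMap.ker πG →ₗ[R] W' :=
    φ ∘ₗ LinearMap.codRestrict (LinearMap.ker g)
      (πB ∘ₗ (LinearMap.ker πG).subtype) (fun v => hkerG_mem v) with hφ'_def
  have hφ'_apply : ∀ (v : LinearMap.ker πG),
      φ' v = φ ⟨πB (v : B'), hkerG_mem v⟩ := fun v => rfl
  obtain ⟨Ψ, hΨ⟩ := hG B' πG hπG φ'
  -- lift Ψ restricted to ker πB through E
  have hkerB_mem : ∀ v : LinearMap.ker πB, πG (v : B') ∈ LinearMap.ker q := by
    intro v
    have h1 : ((v : B') : B × G₀).1 = 0 := LinearMap.mem_ker.mp v.2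
    have := (hB'_mem ((v : B') : B × G₀)).mp (v : B').2
    rw [LinearMap.mem_ker, hπG_apply, ← this, h1, map_zero]
  set j : LinearMap.ker πB →ₗ[R] LinearMap.ker q :=
    LinearMap.codRestrict (LinearMap.ker q)
      (πG ∘ₗ (LinearMap.ker πB).subtype) (fun v => hkerB_mem v) with hj_def
  have hj_bij : Function.Bijective j := by
    constructor
    · intro v w hvw
      have h2 : πG (v : B') = πG (w : B') := congrArg Subtype.val hvw
      apply Subtype.ext; apply Subtype.ext; apply Prod.ext
      · rw [← hπB_apply, ← hπB_apply, LinearMap.mem_ker.mp v.2, LinearMap.mem_ker.mp w.2]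
      · rw [← hπG_apply, ← hπG_apply, h2]
    · rintro ⟨x, hx⟩
      have hmem : ((0 : B), x) ∈ B' := by
        rw [hB'_mem]
        simp [LinearMap.mem_ker.mp hx]
      have hmem2 : (⟨((0 : B), x), hmem⟩ : B') ∈ LinearMap.ker πB := by
        rw [LinearMap.mem_ker, hπB_apply]
      exact ⟨⟨⟨((0 : B), x), hmem⟩, hmem2⟩, rfl⟩
  have hkerπB : ExtZero R V (LinearMap.ker πB) :=
    extZero_congr_right hker (LinearEquiv.ofBijective j hj_bij).symm
  obtain ⟨lam, hlam⟩ := elift f hf p hp hfp hkerπB (Ψ ∘ₗ (LinearMap.ker πB).subtype)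
  set ι : LinearMap.ker πB →ₗ[R] G₀ := πG ∘ₗ (LinearMap.ker πB).subtype with hι_def
  have hι_inj : Function.Injective ι := by
    intro v w hvw
    exact (LinearEquiv.ofBijective j hj_bij).injective (Subtype.ext hvw)
  obtain ⟨Λ, hΛ⟩ := hE.out (X := LinearMap.ker πB) (Y := G₀) ι hι_inj lam
  set Ψ' : B' →ₗ[R] W' := Ψ - p ∘ₗ Λ ∘ₗ πG with hΨ'_def
  have hkerΨ' : LinearMap.ker πB ≤ LinearMap.ker Ψ' := by
    intro v hv
    rw [LinearMap.mem_ker, hΨ'_def]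
    simp only [LinearMap.sub_apply, LinearMap.comp_apply]
    have h1 : πG v = ι (⟨v, hv⟩ : LinearMap.ker πB) := rfl
    rw [h1, hΛ, hlam]
    simp [sub_eq_zero]
  obtain ⟨ψ, hψ⟩ := descend πB hπB Ψ' hkerΨ'
  refine ⟨ψ, fun x hx => ?_⟩
  have hmem : ((x : B), (0 : G₀)) ∈ B' := by
    rw [hB'_mem]
    simp [LinearMap.mem_ker.mp hx]
  set v : B' := ⟨((x : B), (0 : G₀)), hmem⟩ with hv_def
  have h1 : πB v = x := rfl
  have h2 : v ∈ LinearMap.ker πG := by rw [LinearMap.mem_ker, hπG_apply]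
  have h3 : ψ x = Ψ' v := by rw [← h1, hψ]
  rw [h3, hΨ'_def]
  simp only [LinearMap.sub_apply, LinearMap.comp_apply]
  have h4 : πG v = 0 := h2
  rw [h4, map_zero, map_zero, sub_zero, hΨ v h2, hφ'_apply]
  exact congrArg φ (Subtype.ext h1)
end Grand

variable (𝒳 : ModuleCat.{u} R → Prop)

/-- `W` has vanishing `Ext¹` against every syzygy of every `𝒳`-complete resolution. -/
def Good (W : Type u) [AddCommGroup W] [Module R W] : Prop :=
  ∀ (C : XCompleteResolution R 𝒳) (m : ℤ), ExtZero R W ↥(LinearMap.range (C.d m))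

variable {𝒳}

theorem extZero_d_shift (C : XCompleteResolution R 𝒳) {a b : ℤ} (h : a = b)
    {W : Type u} [AddCommGroup W] [Module R W]
    (hx : ExtZero R W ↥(LinearMap.range (C.d a))) :
    ExtZero R W ↥(LinearMap.range (C.d b)) := by
  subst h; exact hx

theorem good_congr {W W' : Type u} [AddCommGroup W] [Module R W]
    [AddCommGroup W'] [Module R W'] (hW : Good 𝒳 W) (e : W ≃ₗ[R] W') : Good 𝒳 W' :=
  fun C m => extZero_congr_left (hW C m) e

set_option maxHeartbeats 1600000 in
theorem good_of_mem (Y : ModuleCat.{u} R) (hY : 𝒳 Y) : Good 𝒳 ↥Y := by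
  have key : ∀ (C : XCompleteResolution R 𝒳) (m : ℤ),
      ExtZero R ↥Y ↥(LinearMap.range (C.d (m + 1 + 1))) := by
    intro C m B _ _ g hg φ
    haveI := C.projective (m + 1 + 1)
    set π := (C.d (m + 1 + 1)).rangeRestrict with hπ_def
    have hπ : Function.Surjective π := (C.d (m + 1 + 1)).surjective_rangeRestrict
    obtain ⟨α, hα⟩ := Module.projective_lifting_property g π hg
    have hkerπ : LinearMap.ker π = LinearMap.range (C.d (m + 1)) := by
      rw [hπ_def, LinearMap.ker_rangeRestrict]
      exact LinearMap.exact_iff.mp (C.exact (m + 1))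
    have hβmem : ∀ x ∈ LinearMap.ker π, α x ∈ LinearMap.ker g := by
      intro x hxm
      rw [LinearMap.mem_ker]
      have hh : g (α x) = π x := LinearMap.congr_fun hα x
      rw [hh, LinearMap.mem_ker.mp hxm]
    set β : LinearMap.ker π →ₗ[R] LinearMap.ker g :=
      LinearMap.codRestrict (LinearMap.ker g) (α ∘ₗ (LinearMap.ker π).subtype)
        (fun x => hβmem _ x.2) with hβ_def
    have hdd : ∀ x, C.d (m + 1) x ∈ LinearMap.ker π := by
      intro x; rw [hkerπ]; exact ⟨x, rfl⟩
    set cor : ↥(C.P (m + 1)) →ₗ[R] LinearMap.ker π :=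
      LinearMap.codRestrict (LinearMap.ker π) (C.d (m + 1)) hdd with hcor_def
    set ψ : ↥(C.P (m + 1)) →ₗ[R] ↥Y := (φ ∘ₗ β) ∘ₗ cor with hψ2_def
    have hψd : ψ ∘ₗ C.d m = 0 := by
      ext x
      have h0 : C.d (m + 1) (C.d m x) = 0 := (C.exact m).apply_apply_eq_zero x
      have h1 : cor (C.d m x) = 0 := Subtype.ext h0
      simp only [LinearMap.comp_apply, LinearMap.zero_apply, hψ2_def, h1, map_zero]
    obtain ⟨θ, hθ⟩ := (C.homExact Y hY m ψ).mp hψd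
    refine core π hπ g α hα φ θ ?_
    intro x hxm hx'
    have hxr : x ∈ LinearMap.range (C.d (m + 1)) := hkerπ ▸ hxm
    obtain ⟨u, hu⟩ := hxr
    have h2 : θ x = ψ u := by
      rw [← hu]
      exact LinearMap.congr_fun hθ u
    have h3 : cor u = ⟨x, hxm⟩ := Subtype.ext hu
    rw [h2, hψ2_def]
    simp only [LinearMap.comp_apply, h3]
    rfl
  intro C m
  exact extZero_d_shift C (show m - 2 + 1 + 1 = m by omega) (key C (m - 2))

theorem gp_extZero {W : Type u} [AddCommGroup W] [Module R W] (hW : Good 𝒳 W)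
    {G : ModuleCat.{u} R} (hG : XGorensteinProjective R 𝒳 G) : ExtZero R W ↥G := by
  obtain ⟨C, ⟨e⟩⟩ := hG
  have h0 : LinearMap.ker (C.d 0) = LinearMap.range (C.d (-1)) :=
    LinearMap.exact_iff.mp (C.exact (-1))
  have h1 : ExtZero R W ↥(LinearMap.ker (C.d 0)) := by rw [h0]; exact hW C (-1)
  exact extZero_congr_right h1 e.symm

theorem goodStep {V E W' : Type u} [AddCommGroup V] [Module R V]
    [AddCommGroup E] [Module R E] [AddCommGroup W'] [Module R W']
    (hV : Good 𝒳 V) (f : V →ₗ[R] E) (hf : Function.Injective f) (p : E →ₗ[R] W')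
    (hp : Function.Surjective p) (hfp : Function.Exact f p)
    (hE : Module.Injective R E) : Good 𝒳 W' := by
  have key : ∀ (C : XCompleteResolution R 𝒳) (m : ℤ),
      ExtZero R W' ↥(LinearMap.range (C.d (m + 1))) := by
    intro C m
    set q := (C.d (m + 1)).rangeRestrict with hq_def
    have hq : Function.Surjective q := (C.d (m + 1)).surjective_rangeRestrict
    have hkerq : LinearMap.ker q = LinearMap.range (C.d m) := by
      rw [hq_def, LinearMap.ker_rangeRestrict]
      exact LinearMap.exact_iff.mp (C.exact m)
    have hker : ExtZero R V ↥(LinearMap.ker q) := by rw [hkerq]; exact hV C m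
    exact grand q hq (extZero_of_projective (C.projective (m + 1))) f hf p hp hfp hE hker
  intro C m
  exact extZero_d_shift C (show m - 1 + 1 = m by omega) (key C (m - 1))

/-- An injective coresolution tower of height `k` starting at `W₀` and ending at `W`. -/
def CoTower : ℕ → ModuleCat.{u} R → ModuleCat.{u} R → Prop
  | 0, W₀, W => Nonempty (W₀ ≃ₗ[R] W)
  | k + 1, W₀, W => ∃ (V E : ModuleCat.{u} R) (f : V →ₗ[R] E) (p : E →ₗ[R] W),
      CoTower k W₀ V ∧ Module.Injective R E ∧ Function.Injective f ∧
      Function.Surjective p ∧ Function.Exact f p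

theorem good_cotower (k : ℕ) (W₀ W : ModuleCat.{u} R) (hW₀ : Good 𝒳 ↥W₀)
    (hT : CoTower k W₀ W) : Good 𝒳 ↥W := by
  induction k generalizing W with
  | zero => obtain ⟨e⟩ := hT; exact good_congr hW₀ e
  | succ k ih =>
    obtain ⟨V, E, f, p, tV, hE, hf, hp, hfp⟩ := hT
    exact goodStep (ih V tV) f hf p hp hfp hE

theorem keyD (n : ℕ) (W₀ : ModuleCat.{u} R) (hW₀ : Good 𝒳 ↥W₀) :
    ∀ (m : ℕ), m ≤ n → ∀ (K M : ModuleCat.{u} R), XGorensteinProjective R 𝒳 K →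
      ResWithKernel R (XGorensteinProjective R 𝒳) m K M →
      ∀ W : ModuleCat.{u} R, CoTower n W₀ W → ExtZero R ↥W ↥M := by
  induction n with
  | zero =>
    intro m hm K M hK hres W hT
    obtain rfl : m = 0 := Nat.le_zero.mp hm
    obtain ⟨e⟩ := hres
    obtain ⟨e'⟩ := hT
    exact extZero_congr_left (extZero_congr_right (gp_extZero hW₀ hK) e) e'
  | succ n ih =>
    intro m hm K M hK hres W hT
    obtain ⟨V, E, f, p, tV, hE, hf, hp, hfp⟩ := hT
    have hGoodW : Good 𝒳 ↥W :=
      good_cotower (n + 1) W₀ W hW₀ ⟨V, E, f, p, tV, hE, hf, hp, hfp⟩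
    cases m with
    | zero =>
      obtain ⟨e⟩ := hres
      exact extZero_congr_right (gp_extZero hGoodW hK) e
    | succ m' =>
      obtain ⟨G₀, L, i, q, hG₀, hi, hq, hiq, res'⟩ := hres
      have hIH : ExtZero R ↥V ↥L :=
        ih m' (Nat.succ_le_succ_iff.mp hm) K L hK res' V tV
      have hkerq : LinearMap.ker q = LinearMap.range i := LinearMap.exact_iff.mp hiq
      have hker : ExtZero R ↥V ↥(LinearMap.ker q) := by
        rw [hkerq]
        exact extZero_congr_right hIH (LinearEquiv.ofInjective i hi)
      exact grand q hq (gp_extZero hGoodW hG₀) f hf p hp hfp hE hker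

theorem hasInj (n : ℕ) : ∀ (k : ℕ) (W₀ : ModuleCat.{u} R), Good 𝒳 ↥W₀ →
    (∀ I : Ideal R, ∃ (m : ℕ) (K : ModuleCat.{u} R), m ≤ n + k ∧
      XGorensteinProjective R 𝒳 K ∧
      ResWithKernel R (XGorensteinProjective R 𝒳) m K (ModuleCat.of R (R ⧸ I))) →
    ∀ W : ModuleCat.{u} R, CoTower k W₀ W → HasInjDimLE R n W := by
  induction n with
  | zero =>
    intro k W₀ hW₀ hres W hT
    show Module.Injective R ↥W
    apply Module.Baer.injective
    intro I φ
    obtain ⟨m, K, hm, hK, hr⟩ := hres I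
    have hext : ExtZero R ↥W ↥(ModuleCat.of R (R ⧸ I)) :=
      keyD k W₀ hW₀ m (by simpa using hm) K _ hK hr W hT
    obtain ⟨ψ, hψ⟩ := hext R I.mkQ (Submodule.mkQ_surjective I)
      (φ ∘ₗ Submodule.inclusion (le_of_eq (Submodule.ker_mkQ I)))
    refine ⟨ψ, fun x mem => ?_⟩
    have hx : x ∈ LinearMap.ker I.mkQ := (Submodule.ker_mkQ I).symm ▸ mem
    rw [hψ x hx]
    rfl
  | succ n ih =>
    intro k W₀ hW₀ hres W hT
    haveI : CategoryTheory.Injective (ModuleCat.of R ↥(Injective.under W)) :=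
      inferInstanceAs (CategoryTheory.Injective (Injective.under W))
    set E : ModuleCat.{u} R := Injective.under W with hE_def
    set f : W →ₗ[R] E := (Injective.ι W).hom with hf_def
    have hEinj : Module.Injective R ↥E :=
      Module.injective_module_of_injective_object R ↥E
    have hfinj : Function.Injective f :=
      (ModuleCat.mono_iff_injective (Injective.ι W)).mp inferInstance
    set Cq : ModuleCat.{u} R := ModuleCat.of R (↥E ⧸ LinearMap.range f) with hC_def
    set p : E →ₗ[R] Cq := (LinearMap.range f).mkQ with hp_def
    have hp : Function.Surjective p := Submodule.mkQ_surjective _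
    have hfp : Function.Exact f p := by
      intro y
      show (LinearMap.range f).mkQ y = 0 ↔ y ∈ Set.range ⇑f
      rw [show (LinearMap.range f).mkQ y = Submodule.Quotient.mk y from rfl,
        Submodule.Quotient.mk_eq_zero]
      exact ⟨fun hh => hh, fun hh => hh⟩
    have hT' : CoTower (k + 1) W₀ Cq := ⟨W, E, f, p, hT, hEinj, hfinj, hp, hfp⟩
    have hres' : ∀ I : Ideal R, ∃ (m : ℕ) (K : ModuleCat.{u} R), m ≤ n + (k + 1) ∧
        XGorensteinProjective R 𝒳 K ∧
        ResWithKernel R (XGorensteinProjective R 𝒳) m K (ModuleCat.of R (R ⧸ I)) := by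
      intro I
      obtain ⟨m, K, hm, hK, hr⟩ := hres I
      exact ⟨m, K, by omega, hK, hr⟩
    have hC : HasInjDimLE R n Cq := ih (k + 1) W₀ hW₀ hres' Cq hT'
    exact ⟨E, Cq, f, p, hEinj, hfinj, hp, hfp, hC⟩

end XGpdProof

/-- If `𝒳-Gpd(R/I) ≤ n` for every left ideal `I` of `R`, then every module in
the class `𝒳` has injective dimension at most `n`. -/
theorem injDim_le_of_xGpd_quotients_le
    (R : Type u) [Ring R] (𝒳 : ModuleCat.{u} R → Prop)
    (h𝒳 : ∀ P : ModuleCat.{u} R, Module.Projective R P → 𝒳 P)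
    (n : ℕ)
    (h : ∀ I : Ideal R, xGpd R 𝒳 (ModuleCat.of R (R ⧸ I)) ≤ (n : ℕ∞)) :
    ∀ Y : ModuleCat.{u} R, 𝒳 Y → injDim R Y ≤ (n : ℕ∞) := by
  intro Y hY
  have hres : ∀ I : Ideal R, ∃ (m : ℕ) (K : ModuleCat.{u} R), m ≤ n + 0 ∧
      XGorensteinProjective R 𝒳 K ∧
      ResWithKernel R (XGorensteinProjective R 𝒳) m K (ModuleCat.of R (R ⧸ I)) := by
    intro I
    set S : Set ℕ∞ := {n' : ℕ∞ | ∃ m : ℕ, n' = m ∧ ∃ K,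
      XGorensteinProjective R 𝒳 K ∧
      ResWithKernel R (XGorensteinProjective R 𝒳) m K (ModuleCat.of R (R ⧸ I))} with hS_def
    have h1 : ∃ x ∈ S, x ≤ (n : ℕ∞) := by
      by_contra hcon
      push_neg at hcon
      have h2 : (n : ℕ∞) + 1 ≤ sInf S := by
        apply le_sInf
        rintro x hxS
        obtain ⟨m, rfl, _⟩ := hxS
        have hlt : (n : ℕ∞) < m := hcon _ ⟨m, rfl, by tauto⟩
        have hnm : n < m := by exact_mod_cast hlt
        exact_mod_cast Nat.succ_le_of_lt hnm
      have h3 : sInf S ≤ (n : ℕ∞) := h I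
      have h4 : (n : ℕ∞) + 1 ≤ (n : ℕ∞) := h2.trans h3
      have h5 : n + 1 ≤ n := by exact_mod_cast h4
      omega
    obtain ⟨x, ⟨m, rfl, K, hK, hr⟩, hle⟩ := h1
    exact ⟨m, K, by simpa using (Nat.cast_le.mp hle), hK, hr⟩
  have hT : XGpdProof.CoTower 0 Y Y := ⟨LinearEquiv.refl R ↥Y⟩
  have hInj : HasInjDimLE R n Y :=
    XGpdProof.hasInj n 0 Y (XGpdProof.good_of_mem Y hY) hres Y hT
  exact sInf_le ⟨n, rfl, hInj⟩
end
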